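/- arXiv:1207.0274 — 5 statements merged into one kernel-verified Lean document; each statement's English description precedes it below -/
import Mathlib

section
/- Let r, D be positive integers with 2rD square-free, and let d be an odd divisor of rD. If the equation W^2 = d + (8rD/d)·Z^4 has a solution in the 2-adic numbers Q_2, then d ≡ 1 (mod 8). -/
/-- If `2rD` is square-free, `d` is an odd divisor of `rD`, and the homogeneous space
`W² = d + (8rD/d)·Z⁴` has a point over `ℚ₂`, then `d ≡ 1 (mod 8)`. -/
theorem stmt_0 (r D : ℕ) (hr : 0 < r) (hD : 0 < D)
    (hsf : Squarefree (2 * r * D)) (d : ℤ) (hdvd : d ∣ (r * D : ℤ)) (hodd : Odd d)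
    (hsol : ∃ z w : ℚ_[2], w ^ 2 = (d : ℚ_[2]) + ((8 * r * D / d : ℤ) : ℚ_[2]) * z ^ 4) :
    d ≡ 1 [ZMOD 8] := by
  obtain ⟨z, w, hzw⟩ := hsol
  -- r*D is odd
  have hrD_odd : ¬ (2:ℤ) ∣ (r*D : ℤ) := by
    intro h2
    have h2' : (2:ℕ) ∣ r*D := by exact_mod_cast h2
    obtain ⟨k, hk⟩ := h2'
    have : ¬ IsUnit (2:ℕ) := by norm_num
    exact this (hsf 2 ⟨k, by rw [mul_assoc, hk]; ring⟩)
  have hdo : ¬ (2:ℤ) ∣ d := by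
    rw [Int.odd_iff] at hodd; omega
  set m : ℤ := (r*D : ℤ) / d with hm
  have hdm : d * m = (r*D : ℤ) := Int.mul_ediv_cancel' hdvd
  have hmo : ¬ (2:ℤ) ∣ m := fun ⟨k, hk⟩ => hrD_odd ⟨d*k, by rw [← hdm, hk]; ring⟩
  have hc : (8 * r * D / d : ℤ) = 8 * m := by
    rw [hm, ← Int.mul_ediv_assoc 8 hdvd]; ring_nf
  rw [hc] at hzw
  push_cast at hzw
  -- norm facts
  have h2n : ‖(2:ℚ_[2])‖ = 1/2 := by
    have := Padic.norm_p (p := 2); rw [show ((2:ℕ):ℚ_[2]) = 2 by norm_num] at this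
    rw [this]; norm_num
  have h8n : ‖(8:ℚ_[2])‖ = 1/8 := by
    rw [show (8:ℚ_[2]) = 2^3 by norm_num, norm_pow, h2n]; norm_num
  have hint_one : ∀ k : ℤ, ¬ (2:ℤ) ∣ k → ‖(k : ℚ_[2])‖ = 1 := by
    intro k hk
    refine le_antisymm (Padic.norm_int_le_one k) ?_
    by_contra h
    exact hk (by exact_mod_cast (Padic.norm_intCast_lt_one_iff (k := k)).mp (lt_of_not_ge h))
  have hdn : ‖(d:ℚ_[2])‖ = 1 := hint_one d hdo
  have hmn : ‖(m:ℚ_[2])‖ = 1 := hint_one m hmo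
  -- ‖z‖ ≤ 1
  have hz1 : ‖z‖ ≤ 1 := by
    by_contra h
    push_neg at h
    have hz0 : z ≠ 0 := by intro h0; rw [h0, norm_zero] at h; linarith
    have hzval : ‖z‖ = (2:ℝ) ^ (-z.valuation) := by
      have := Padic.norm_eq_zpow_neg_valuation hz0; rwa [show ((2:ℕ):ℝ) = 2 by norm_num] at this
    have hvz : z.valuation ≤ -1 := by
      by_contra hv
      push_neg at hv
      have : -z.valuation ≤ 0 := by omega
      have : (2:ℝ) ^ (-z.valuation) ≤ 1 := zpow_le_one_of_nonpos₀ (by norm_num) this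
      rw [← hzval] at this; linarith
    have hnr : ‖8 * (m:ℚ_[2]) * z^4‖ = (2:ℝ) ^ (-(3 + 4*z.valuation)) := by
      rw [norm_mul, norm_mul, h8n, hmn, norm_pow, hzval, mul_one,
        ← zpow_natCast ((2:ℝ)^(-z.valuation)), ← zpow_mul,
        show (1:ℝ)/8 = (2:ℝ)^(-3:ℤ) by norm_num,
        ← zpow_add₀ (by norm_num : (2:ℝ) ≠ 0)]
      congr 1
      push_cast
      ring
    have hbig : (1:ℝ) < (2:ℝ) ^ (-(3 + 4*z.valuation)) :=
      one_lt_zpow₀ (by norm_num) (by omega)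
    have hne : ‖(d:ℚ_[2])‖ ≠ ‖8 * (m:ℚ_[2]) * z^4‖ := by
      rw [hdn, hnr]; exact fun h' => by rw [← h'] at hbig; linarith
    have hsum : ‖(d:ℚ_[2]) + 8 * (m:ℚ_[2]) * z^4‖ = (2:ℝ) ^ (-(3 + 4*z.valuation)) := by
      rw [Padic.add_eq_max_of_ne hne, hdn, hnr]
      exact max_eq_right (le_of_lt hbig)
    have hw0 : w ≠ 0 := by
      intro h0
      rw [h0] at hzw
      have h' : (0:ℝ) = 2 ^ (-(3 + 4*z.valuation)) := by rw [← hsum, ← hzw]; simp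
      linarith [zpow_pos (show (0:ℝ) < 2 by norm_num) (-(3 + 4*z.valuation))]
    have hwval : ‖w‖ = (2:ℝ) ^ (-w.valuation) := by
      have := Padic.norm_eq_zpow_neg_valuation hw0; rwa [show ((2:ℕ):ℝ) = 2 by norm_num] at this
    have hkey : (2:ℝ) ^ (-(2*w.valuation)) = (2:ℝ) ^ (-(3 + 4*z.valuation)) := by
      rw [← hsum, ← hzw, norm_pow, hwval, ← zpow_natCast ((2:ℝ)^(-w.valuation)), ← zpow_mul]
      ring_nf
    have := zpow_right_injective₀ (by norm_num : (0:ℝ) < 2) (by norm_num) hkey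
    omega
  -- ‖w‖ = 1
  have hrhs_small : ‖8 * (m:ℚ_[2]) * z^4‖ < 1 := by
    rw [norm_mul, norm_mul, h8n, hmn, norm_pow]
    have : ‖z‖^4 ≤ 1 := pow_le_one₀ (norm_nonneg z) hz1
    nlinarith
  have hne : ‖(d:ℚ_[2])‖ ≠ ‖8 * (m:ℚ_[2]) * z^4‖ := by
    rw [hdn]; exact fun h' => by rw [← h'] at hrhs_small; linarith
  have hw1 : ‖w‖ = 1 := by
    have h1 : ‖w‖^2 = 1 := by
      rw [← norm_pow, hzw, Padic.add_eq_max_of_ne hne, hdn]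
      exact max_eq_left (le_of_lt hrhs_small)
    nlinarith [norm_nonneg w]
  -- lift to ℤ_[2]
  set Z : ℤ_[2] := ⟨z, hz1⟩ with hZ
  set W : ℤ_[2] := ⟨w, le_of_eq hw1⟩ with hW
  have heq : W^2 = (d : ℤ_[2]) + 8 * (m : ℤ_[2]) * Z^4 := by
    apply Subtype.coe_injective
    push_cast
    exact hzw
  have hWu : IsUnit W := PadicInt.isUnit_iff.mpr hw1
  set φ := PadicInt.toZModPow (p := 2) 3 with hφ
  have hfu : IsUnit (φ W) := hWu.map φ
  have hsq : ∀ u : (ZMod (2^3))ˣ, (u : ZMod (2^3))^2 = 1 := by decide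
  obtain ⟨u, hu⟩ := hfu
  have h1 : (φ W)^2 = 1 := by rw [← hu]; exact_mod_cast hsq u
  have h2 : φ (W^2) = (d : ZMod (2^3)) := by
    rw [heq]
    simp only [map_add, map_mul, map_pow, map_intCast, map_ofNat]
    have h80 : (8 : ZMod (2^3)) = 0 := by decide
    rw [h80]
    ring
  have hd1 : (d : ZMod (2^3)) = 1 := by rw [← h2, map_pow, h1]
  have : d ≡ 1 [ZMOD (2^3 : ℕ)] := by
    rwa [← ZMod.intCast_eq_intCast_iff, Int.cast_one]
  simpa using this
end

section
/- Let r, D be positive integers with 2rD square-free, d an odd divisor of rD, and l an odd prime dividing d. Then the equation W^2 = d + (8rD/d)·Z^4 has a solution in Q_l if and only if 2rD/d is a quadratic residue modulo l. -/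
open Polynomial in
/-- Hensel lift: a nonzero square mod odd `p` is a square in `ℚ_p`. -/
lemma aux_sq_lift (p : ℕ) [hp : Fact p.Prime] (hp2 : p ≠ 2) (a : ℤ)
    (ha : ¬ (p : ℤ) ∣ a) (hsq : IsSquare ((a : ZMod p))) :
    ∃ w : ℚ_[p], w ^ 2 = (a : ℚ_[p]) := by
  obtain ⟨s, hs⟩ := hsq
  set b : ℤ := (s.val : ℤ) with hb
  have hbs : ((b : ZMod p)) = s := by
    simp [hb, ZMod.natCast_val, ZMod.cast_id]
  have hdvd1 : (p : ℤ) ∣ b ^ 2 - a := by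
    rw [← ZMod.intCast_zmod_eq_zero_iff_dvd]
    push_cast
    rw [hbs, hs]; ring
  have hbnd : ¬ (p : ℤ) ∣ b := by
    intro h
    have hb0 : ((b : ZMod p)) = 0 := (ZMod.intCast_zmod_eq_zero_iff_dvd _ _).mpr h
    apply ha
    rw [← ZMod.intCast_zmod_eq_zero_iff_dvd, hs, ← hbs, hb0, mul_zero]
  have h2b : ¬ (p : ℤ) ∣ 2 * b := by
    intro h
    rcases (Int.Prime.dvd_mul' hp.out h) with h2 | h
    · have hp2' : p ∣ 2 := by exact_mod_cast h2
      exact hp2 ((Nat.prime_dvd_prime_iff_eq hp.out Nat.prime_two).mp hp2')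
    · exact hbnd h
  set F : Polynomial ℤ_[p] := X ^ 2 - C (a : ℤ_[p]) with hF
  have hFeval : F.eval (b : ℤ_[p]) = ((b ^ 2 - a : ℤ) : ℤ_[p]) := by
    simp [hF]
  have hFder : F.derivative.eval (b : ℤ_[p]) = ((2 * b : ℤ) : ℤ_[p]) := by
    simp [hF]
    exact Or.inl one_add_one_eq_two
  have hnorm : ‖F.eval (b : ℤ_[p])‖ < ‖F.derivative.eval (b : ℤ_[p])‖ ^ 2 := by
    rw [hFeval, hFder]
    have h1 : ‖((b ^ 2 - a : ℤ) : ℤ_[p])‖ < 1 :=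
      (PadicInt.norm_int_lt_one_iff_dvd _).mpr hdvd1
    have h2 : ‖((2 * b : ℤ) : ℤ_[p])‖ = 1 := by
      have := (PadicInt.norm_int_lt_one_iff_dvd (p := p) (2 * b)).not.mpr h2b
      have hle := PadicInt.norm_le_one (((2 * b : ℤ)) : ℤ_[p])
      push_neg at this
      linarith
    rw [h2]; simpa using h1
  obtain ⟨z, hz, -⟩ := hensels_lemma hnorm
  refine ⟨(z : ℚ_[p]), ?_⟩
  have hz2 : z ^ 2 = ((a : ℤ) : ℤ_[p]) := by
    have := hz
    simp [hF, sub_eq_zero] at this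
    exact this
  have := congrArg (fun x : ℤ_[p] => (x : ℚ_[p])) hz2
  push_cast at this
  exact_mod_cast this

/-- If `w² = e + m·z⁴` in `ℚ_p` with `‖e‖ < 1` and `‖z‖ = 1`, then `m` is a square mod `p`. -/
lemma aux_sq_reduce (p : ℕ) [hp : Fact p.Prime] (m : ℤ) (e z w : ℚ_[p])
    (he : ‖e‖ < 1) (hz : ‖z‖ = 1)
    (heq : w ^ 2 = e + (m : ℚ_[p]) * z ^ 4) : IsSquare ((m : ZMod p)) := by
  have hm1 : ‖(m : ℚ_[p])‖ ≤ 1 := Padic.norm_int_le_one m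
  have hw1 : ‖w‖ ≤ 1 := by
    have h4 : ‖(m : ℚ_[p]) * z ^ 4‖ ≤ 1 := by
      rw [norm_mul, norm_pow, hz]
      simpa using hm1
    have : ‖w ^ 2‖ ≤ 1 := by
      rw [heq]
      exact le_trans (Padic.nonarchimedean _ _) (max_le he.le h4)
    rw [norm_pow] at this
    nlinarith [norm_nonneg w]
  set W : ℤ_[p] := ⟨w, hw1⟩ with hW
  set Z : ℤ_[p] := ⟨z, hz.le⟩ with hZ
  set E : ℤ_[p] := ⟨e, he.le⟩ with hE
  have heqZ : W ^ 2 = E + (m : ℤ_[p]) * Z ^ 4 := by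
    apply Subtype.ext
    push_cast [hW, hZ, hE]
    exact heq
  have h0 : PadicInt.toZMod E = 0 := by
    rw [← RingHom.mem_ker, PadicInt.ker_toZMod, PadicInt.maximalIdeal_eq_span_p,
      Ideal.mem_span_singleton]
    exact (PadicInt.norm_lt_one_iff_dvd E).mp he
  have hZ0 : PadicInt.toZMod Z ≠ 0 := by
    intro h
    rw [← RingHom.mem_ker, PadicInt.ker_toZMod, PadicInt.maximalIdeal_eq_span_p,
      Ideal.mem_span_singleton, ← PadicInt.norm_lt_one_iff_dvd] at h
    rw [PadicInt.norm_def] at h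
    simp only [hZ] at h
    rw [hz] at h
    exact lt_irrefl _ h
  have hred := congrArg PadicInt.toZMod heqZ
  simp only [map_pow, map_add, map_mul, map_intCast, h0, zero_add] at hred
  -- hred : (toZMod W)^2 = (m : ZMod p) * (toZMod Z)^4
  refine ⟨PadicInt.toZMod W * (PadicInt.toZMod Z ^ 2)⁻¹, ?_⟩
  have h4 : PadicInt.toZMod Z ^ 2 ≠ 0 := pow_ne_zero _ hZ0
  field_simp
  linear_combination -hred

/-- For `2rD` square-free, `d` an odd divisor of `rD` and `l` an odd prime dividing `d`,
the homogeneous space `W² = d + (8rD/d)·Z⁴` has a `ℚ_l`-point iff `2rD/d` is a quadratic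
residue modulo `l`. -/
theorem stmt_3 (r D : ℕ) (hr : 0 < r) (hD : 0 < D)
    (hsf : Squarefree (2 * r * D)) (d : ℤ) (hdvd : d ∣ (r * D : ℤ)) (hodd : Odd d)
    (l : ℕ) [hl : Fact l.Prime] (hlodd : l ≠ 2) (hldvd : (l : ℤ) ∣ d) :
    (∃ z w : ℚ_[l], w ^ 2 = (d : ℚ_[l]) + ((8 * r * D / d : ℤ) : ℚ_[l]) * z ^ 4) ↔
      IsSquare ((2 * r * D / d : ℤ) : ZMod l) := by
  have hd0 : d ≠ 0 := by
    rintro rfl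
    rw [zero_dvd_iff] at hdvd
    have : (r : ℤ) * D ≠ 0 := by positivity
    exact this hdvd
  obtain ⟨c, hc⟩ := hdvd
  set m' : ℤ := 2 * c with hm'
  have hdiv8 : (8 * r * D / d : ℤ) = 4 * m' := by
    have : (8 * r * D : ℤ) = d * (4 * m') := by rw [hm']; linarith [hc]
    rw [this, Int.mul_ediv_cancel_left _ hd0]
  have hdiv2 : (2 * r * D / d : ℤ) = m' := by
    have : (2 * r * D : ℤ) = d * m' := by rw [hm']; linarith [hc]
    rw [this, Int.mul_ediv_cancel_left _ hd0]
  have hdm' : d * m' = (2 * r * D : ℤ) := by rw [hm']; linarith [hc]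
  have hsfZ : ¬ ((l : ℤ) * l ∣ (2 * r * D : ℤ)) := by
    intro h
    have h' : l * l ∣ 2 * r * D := by exact_mod_cast h
    exact hl.out.one_lt.ne' (Nat.isUnit_iff.mp (hsf l h'))
  have hlm' : ¬ ((l : ℤ) ∣ m') := by
    intro h
    apply hsfZ
    rw [← hdm']
    exact mul_dvd_mul hldvd h
  have hl2 : ((2 : ZMod l)) ≠ 0 := by
    intro h
    have : (l : ℤ) ∣ 2 := by
      rwa [← ZMod.intCast_zmod_eq_zero_iff_dvd (2 : ℤ) l, Int.cast_two]
    have h2 : l ∣ 2 := by exact_mod_cast this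
    exact hlodd ((Nat.prime_dvd_prime_iff_eq hl.out Nat.prime_two).mp h2)
  have hlR : (1 : ℝ) < l := by exact_mod_cast hl.out.one_lt
  have hlR0 : (0 : ℝ) < l := by linarith
  have hdle : ‖((d : ℤ) : ℚ_[l])‖ ≤ (l : ℝ) ^ (-(1 : ℕ) : ℤ) := by
    rw [Padic.norm_int_le_pow_iff_dvd]
    simpa using hldvd
  have hdgt : ¬ ‖((d : ℤ) : ℚ_[l])‖ ≤ (l : ℝ) ^ (-(2 : ℕ) : ℤ) := by
    rw [Padic.norm_int_le_pow_iff_dvd]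
    intro h
    apply hsfZ
    rw [← hdm']
    calc (l : ℤ) * l ∣ d := by rwa [← sq]
    _ ∣ d * m' := dvd_mul_right _ _
  rw [hdiv2]
  constructor
  · rintro ⟨z, w, heq⟩
    rw [hdiv8] at heq
    have key : IsSquare (((4 * m' : ℤ)) : ZMod l) := by
      by_cases hzs : ‖z‖ ≤ (l : ℝ) ^ (-(1:ℕ) : ℤ)
      · -- small z : contradiction
        exfalso
        have ht : ‖((4 * m' : ℤ) : ℚ_[l]) * z ^ 4‖ ≤ (l : ℝ) ^ (-(4:ℕ) : ℤ) := by
          rw [norm_mul, norm_pow]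
          calc ‖((4 * m' : ℤ) : ℚ_[l])‖ * ‖z‖ ^ 4
              ≤ 1 * ((l : ℝ) ^ (-(1:ℕ) : ℤ)) ^ 4 := by
                apply mul_le_mul (Padic.norm_int_le_one _)
                  (pow_le_pow_left₀ (norm_nonneg _) hzs 4) (by positivity) zero_le_one
            _ = (l : ℝ) ^ (-(4:ℕ) : ℤ) := by
                rw [one_mul, ← zpow_natCast (((l : ℝ) ^ (-(1:ℕ) : ℤ))) 4, ← zpow_mul]
                norm_num
        have hdgt' : (l : ℝ) ^ (-(2:ℕ) : ℤ) < ‖((d : ℤ) : ℚ_[l])‖ := not_le.mp hdgt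
        have hlt : ‖((4 * m' : ℤ) : ℚ_[l]) * z ^ 4‖ < ‖((d : ℤ) : ℚ_[l])‖ := by
          calc ‖((4 * m' : ℤ) : ℚ_[l]) * z ^ 4‖ ≤ (l : ℝ) ^ (-(4:ℕ) : ℤ) := ht
            _ < (l : ℝ) ^ (-(2:ℕ) : ℤ) := by
                apply zpow_lt_zpow_right₀ hlR; norm_num
            _ < ‖((d : ℤ) : ℚ_[l])‖ := hdgt'
        have hsum : ‖w ^ 2‖ = ‖((d : ℤ) : ℚ_[l])‖ := by
          rw [heq, Padic.add_eq_max_of_ne (ne_of_gt hlt)]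
          exact max_eq_left hlt.le
        have hw0 : w ≠ 0 := by
          intro h
          rw [h] at hsum
          simp at hsum
          rw [← hsum] at hdgt'
          have hpos : (0:ℝ) < (l : ℝ) ^ (-(2:ℕ) : ℤ) := by positivity
          linarith
        rw [norm_pow, Padic.norm_eq_zpow_neg_valuation hw0] at hsum
        rw [← zpow_natCast ((l:ℝ) ^ (-w.valuation)) 2, ← zpow_mul] at hsum
        have h1 : (l : ℝ) ^ (-w.valuation * 2) ≤ (l : ℝ) ^ (-(1:ℕ) : ℤ) := hsum ▸ hdle
        have h2 : (l : ℝ) ^ (-(2:ℕ) : ℤ) < (l : ℝ) ^ (-w.valuation * 2) := hsum ▸ hdgt'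
        rw [zpow_le_zpow_iff_right₀ hlR] at h1
        rw [zpow_lt_zpow_iff_right₀ hlR] at h2
        omega
      · -- big z : rescale
        push_neg at hzs
        have hz0 : z ≠ 0 := by
          intro h
          rw [h, norm_zero] at hzs
          have : (0:ℝ) < (l : ℝ) ^ (-(1:ℕ) : ℤ) := by positivity
          linarith
        have hzval : ‖z‖ = (l : ℝ) ^ (-z.valuation) := Padic.norm_eq_zpow_neg_valuation hz0
        have hvle : -z.valuation ≥ 0 := by
          rw [hzval, zpow_lt_zpow_iff_right₀ hlR] at hzs
          omega
        set k : ℕ := (-z.valuation).toNat with hk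
        have hkv : (k : ℤ) = -z.valuation := Int.toNat_of_nonneg hvle
        set zz : ℚ_[l] := (l : ℚ_[l]) ^ k * z with hzz
        set ww : ℚ_[l] := (l : ℚ_[l]) ^ (2 * k) * w with hww
        set e : ℚ_[l] := (l : ℚ_[l]) ^ (4 * k) * ((d : ℤ) : ℚ_[l]) with he
        have hzz1 : ‖zz‖ = 1 := by
          rw [hzz, norm_mul, Padic.norm_p_pow, hzval, ← zpow_add₀ (ne_of_gt hlR0),
            hkv]
          simp
        have he1 : ‖e‖ < 1 := by
          rw [he, norm_mul, Padic.norm_p_pow]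
          calc (l:ℝ) ^ (-(4*k:ℕ) : ℤ) * ‖((d : ℤ) : ℚ_[l])‖
              ≤ 1 * ((l : ℝ) ^ (-(1:ℕ) : ℤ)) := by
                apply mul_le_mul _ hdle (norm_nonneg _) zero_le_one
                apply zpow_le_one_of_nonpos₀ hlR.le
                simp
            _ < 1 := by
                rw [one_mul]
                have : (l : ℝ) ^ (-(1:ℕ) : ℤ) < (l : ℝ) ^ (0 : ℤ) :=
                  zpow_lt_zpow_right₀ hlR (by norm_num)
                simpa using this
        have heq2 : ww ^ 2 = e + ((4 * m' : ℤ) : ℚ_[l]) * zz ^ 4 := by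
          rw [hww, hzz, he]
          linear_combination ((l : ℚ_[l]) ^ (4 * k)) * heq
        exact aux_sq_reduce l (4 * m') e zz ww he1 hzz1 heq2
    obtain ⟨s, hs⟩ := key
    refine ⟨2⁻¹ * s, ?_⟩
    push_cast at hs
    field_simp
    linear_combination hs
  · rintro ⟨s, hs⟩
    set a : ℤ := d + 4 * m' with ha
    have haZ : ((a : ZMod l)) = 4 * ((m' : ℤ) : ZMod l) := by
      rw [ha]
      push_cast
      rw [(ZMod.intCast_zmod_eq_zero_iff_dvd d l).mpr hldvd]
      ring
    have h4 : ((4 : ZMod l)) ≠ 0 := by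
      intro h
      apply hl2
      have : ((2 : ZMod l)) * 2 = 0 := by rw [← h]; norm_num
      rcases mul_eq_zero.mp this with h' | h' <;> exact h'
    have hand : ¬ ((l : ℤ) ∣ a) := by
      intro h
      rw [← ZMod.intCast_zmod_eq_zero_iff_dvd] at h
      rw [haZ] at h
      rcases mul_eq_zero.mp h with h' | h'
      · exact h4 h'
      · exact hlm' ((ZMod.intCast_zmod_eq_zero_iff_dvd m' l).mp h')
    have hasq : IsSquare ((a : ZMod l)) := by
      refine ⟨2 * s, ?_⟩
      rw [haZ, hs]
      ring
    obtain ⟨w, hw⟩ := aux_sq_lift l hlodd a hand hasq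
    refine ⟨1, w, ?_⟩
    rw [hdiv8, hw, ha]
    push_cast
    ring
end

section
/- Let E : y^2 = x^3 - 2rDx with 2rD square-free, Q a point of infinite order in E(Q), and t an odd prime dividing rD. If v_t(x(Q)) ≤ 0, then for every nonzero integer k: v_t(x([2k]Q)) and v_t(x([2k+1]Q)) are nonpositive even integers, while v_t(x([2k]Q + T)) and v_t(x([2k+1]Q + T)) are positive odd integers, where T = (0,0). -/
/-- The curve `y² = x³ + Ax` over `ℚ`. -/
def Ecurve (A : ℚ) : WeierstrassCurve.Affine ℚ := ⟨0, 0, 0, A, 0⟩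

/-- The `x`-coordinate of an affine point, with junk value `0` at the point at infinity. -/
def xCoord {A : ℚ} : (Ecurve A).Point → ℚ
  | .zero => 0
  | @WeierstrassCurve.Affine.Point.some _ _ _ x _ _ => x

namespace StmtAux

open WeierstrassCurve.Affine

variable {A : ℚ} {t : ℕ} [hp : Fact t.Prime]

lemma Ea₁ : (Ecurve A).a₁ = 0 := rfl
lemma Ea₂ : (Ecurve A).a₂ = 0 := rfl
lemma Ea₄ : (Ecurve A).a₄ = A := rfl

omit hp in
lemma negY_eq (x y : ℚ) : (Ecurve A).negY x y = -y := by
  rw [negY, Ea₁]; show -y - 0 * x - 0 = -y; ring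

omit hp in
lemma ecurve_eq' (x y : ℚ) (h : (Ecurve A).Equation x y) : y ^ 2 = x ^ 3 + A * x := by
  have := (equation_iff (W := Ecurve A) x y).mp h
  rw [Ea₁, Ea₂, Ea₄] at this
  rw [show (Ecurve A).a₃ = 0 from rfl, show (Ecurve A).a₆ = 0 from rfl] at this
  linarith [this]

omit hp in
lemma xCoord_some {x y : ℚ} (h : (Ecurve A).Nonsingular x y) :
    xCoord (Point.some _ _ h) = x := rfl

omit hp in
lemma xCoord_neg (P : (Ecurve A).Point) : xCoord (-P) = xCoord P := by
  cases P with
  | zero => rfl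
  | some h => rfl

omit hp in
lemma addT_x {x y : ℚ} (h : (Ecurve A).Nonsingular x y) (hT : (Ecurve A).Nonsingular 0 0)
    (hx : x ≠ 0) : xCoord (Point.some _ _ h + Point.some _ _ hT) = A / x := by
  rw [Point.add_of_X_ne hx, xCoord_some, slope_of_X_ne hx, addX, Ea₁, Ea₂]
  have e := ecurve_eq' x y h.1
  field_simp
  linear_combination x * e

omit hp in
/-- If three (affine) points of `Ecurve A` are collinear, the product of their `x`-coordinates
is the square of the `y`-intercept of the line joining them. -/
lemma prod_eq_sq {x₁ x₂ y₁ y₂ : ℚ} (h₁ : (Ecurve A).Equation x₁ y₁)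
    (h₂ : (Ecurve A).Equation x₂ y₂)
    (hxy : ¬(x₁ = x₂ ∧ y₁ = (Ecurve A).negY x₂ y₂)) :
    x₁ * x₂ * (Ecurve A).addX x₁ x₂ ((Ecurve A).slope x₁ x₂ y₁ y₂)
      = (y₁ - (Ecurve A).slope x₁ x₂ y₁ y₂ * x₁) ^ 2 := by
  have e1 := ecurve_eq' _ _ h₁
  have e2 := ecurve_eq' _ _ h₂
  by_cases hx : x₁ = x₂
  · subst hx
    have hy : y₁ ≠ (Ecurve A).negY x₁ y₂ := fun h => hxy ⟨rfl, h⟩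
    rw [negY_eq] at hy
    have hyy : y₁ = y₂ := by
      have h0 : (y₁ - y₂) * (y₁ + y₂) = 0 := by nlinarith [e1, e2]
      rcases mul_eq_zero.mp h0 with h | h
      · linarith
      · exact absurd (by linarith : y₁ = -y₂) hy
    subst hyy
    have hy0 : y₁ ≠ 0 := fun h => hy (by rw [h]; ring)
    rw [slope_of_Y_ne rfl (by rw [negY_eq]; exact hy), addX, negY_eq, Ea₁, Ea₂, Ea₄]
    have h2y : y₁ + y₁ ≠ 0 := by intro h; apply hy0; linarith
    field_simp [h2y]
    linear_combination (-4 * y₁ ^ 2) * e1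
  · rw [slope_of_X_ne hx, addX, Ea₁, Ea₂]
    have hne : x₁ - x₂ ≠ 0 := sub_ne_zero.mpr hx
    field_simp
    linear_combination (x₁ * x₂ - x₂ ^ 2) * e1 + (x₁ * x₂ - x₁ ^ 2) * e2

-- From here on we assume `v_t(A) = 1`.
variable (hA : padicValRat t A = 1)
include hA

omit hp in
lemma A_ne_zero : A ≠ 0 := by
  intro h
  rw [h, padicValRat.zero] at hA
  exact one_ne_zero hA.symm

lemma sq_ne_negA (x : ℚ) : x ^ 2 + A ≠ 0 := by
  intro h
  have hx : x ≠ 0 := by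
    rintro rfl
    exact A_ne_zero hA (by simpa using h)
  have hx2 : x ^ 2 = -A := by linarith [h]
  have h1 : padicValRat t (x ^ 2) = padicValRat t A := by
    rw [hx2, padicValRat.neg]
  rw [hA] at h1
  have h2 : padicValRat t (x ^ 2) = 2 * padicValRat t x := by
    rw [padicValRat.pow x]; norm_num
  omega

lemma y_ne_zero {x y : ℚ} (h : (Ecurve A).Equation x y) (hx : x ≠ 0) : y ≠ 0 := by
  intro hy
  have e := ecurve_eq' x y h
  rw [hy] at e
  have h0 : x * (x ^ 2 + A) = 0 := by linarith [e]
  rcases mul_eq_zero.mp h0 with h' | h'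
  · exact hx h'
  · exact sq_ne_negA hA x h'

/-- Dichotomy of valuations of `x`-coordinates of points on the curve. -/
lemma dichotomy {x y : ℚ} (h : (Ecurve A).Equation x y) (hx : x ≠ 0) :
    (padicValRat t x ≤ 0 ∧ Even (padicValRat t x)) ∨
      (1 ≤ padicValRat t x ∧ Odd (padicValRat t x)) := by
  have hy := y_ne_zero hA h hx
  have hu : x ^ 2 + A ≠ 0 := sq_ne_negA hA x
  have e : y ^ 2 = x * (x ^ 2 + A) := by have := ecurve_eq' x y h; linarith [this]
  have hx2 : padicValRat t (x ^ 2) = 2 * padicValRat t x := by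
    rw [padicValRat.pow x]; norm_num
  have hv : 2 * padicValRat t y = padicValRat t x + padicValRat t (x ^ 2 + A) := by
    have h1 : padicValRat t (y ^ 2) = 2 * padicValRat t y := by
      rw [padicValRat.pow y]; norm_num
    rw [← h1, e, padicValRat.mul hx hu]
  rcases lt_trichotomy (padicValRat t x) 0 with hc | hc | hc
  · left
    have hxx : padicValRat t (x ^ 2) < padicValRat t A := by
      rw [hx2, hA]; omega
    have hq : padicValRat t (x ^ 2 + A) = padicValRat t (x ^ 2) :=
      padicValRat.add_eq_of_lt hu (pow_ne_zero 2 hx) (A_ne_zero hA) hxx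
    rw [hq, hx2] at hv
    constructor
    · omega
    · exact ⟨padicValRat t y - padicValRat t x, by omega⟩
  · left; exact ⟨le_of_eq hc, by rw [hc]; exact Even.zero⟩
  · right
    have hxx : padicValRat t A < padicValRat t (x ^ 2) := by
      rw [hx2, hA]; omega
    have hq : padicValRat t (x ^ 2 + A) = padicValRat t A := by
      rw [add_comm]
      exact padicValRat.add_eq_of_lt (by rwa [add_comm]) (A_ne_zero hA) (pow_ne_zero 2 hx) hxx
    rw [hq, hA] at hv
    exact ⟨by omega, ⟨padicValRat t y - 1, by omega⟩⟩

lemma even_to_le {x y : ℚ} (h : (Ecurve A).Equation x y) (hx : x ≠ 0)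
    (he : Even (padicValRat t x)) : padicValRat t x ≤ 0 := by
  rcases dichotomy hA h hx with ⟨h1, _⟩ | ⟨_, h2⟩
  · exact h1
  · exact absurd he (Int.not_even_iff_odd.mpr h2)

omit hA in
/-- Parity of the valuation of the `x`-coordinate is additive. -/
lemma even_addX {x₁ x₂ y₁ y₂ : ℚ} (h₁ : (Ecurve A).Equation x₁ y₁)
    (h₂ : (Ecurve A).Equation x₂ y₂)
    (hxy : ¬(x₁ = x₂ ∧ y₁ = (Ecurve A).negY x₂ y₂)) (hx₁ : x₁ ≠ 0) (hx₂ : x₂ ≠ 0)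
    (hx₃ : (Ecurve A).addX x₁ x₂ ((Ecurve A).slope x₁ x₂ y₁ y₂) ≠ 0)
    (he₁ : Even (padicValRat t x₁)) (he₂ : Even (padicValRat t x₂)) :
    Even (padicValRat t ((Ecurve A).addX x₁ x₂ ((Ecurve A).slope x₁ x₂ y₁ y₂))) := by
  set x₃ := (Ecurve A).addX x₁ x₂ ((Ecurve A).slope x₁ x₂ y₁ y₂) with hx₃def
  have hprod := prod_eq_sq h₁ h₂ hxy
  set ν := y₁ - (Ecurve A).slope x₁ x₂ y₁ y₂ * x₁ with hν
  have hν0 : ν ≠ 0 := by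
    intro h0
    rw [h0] at hprod
    simp only [ne_eq, zero_pow, OfNat.ofNat_ne_zero, not_false_eq_true] at hprod
    exact (mul_ne_zero (mul_ne_zero hx₁ hx₂) hx₃) hprod
  have hval : padicValRat t x₁ + padicValRat t x₂ + padicValRat t x₃
      = 2 * padicValRat t ν := by
    have h1 : padicValRat t (x₁ * x₂ * x₃) = 2 * padicValRat t ν := by
      rw [hprod, padicValRat.pow ν]; norm_num
    rw [← h1, padicValRat.mul (mul_ne_zero hx₁ hx₂) hx₃, padicValRat.mul hx₁ hx₂]
  obtain ⟨a, ha⟩ := he₁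
  obtain ⟨b, hb⟩ := he₂
  exact ⟨padicValRat t ν - a - b, by omega⟩

section MainInduction

variable {Q : (Ecurve A).Point} (hQ : ¬ IsOfFinAddOrder Q)
include hQ

omit hp hA in
lemma zsmul_ne_zero (n : ℤ) (hn : n ≠ 0) : n • Q ≠ 0 := by
  intro h
  exact hQ (isOfFinAddOrder_iff_zsmul_eq_zero.mpr ⟨n, hn, h⟩)

lemma exists_form (n : ℤ) (hn : n ≠ 0) :
    ∃ x y, ∃ h : (Ecurve A).Nonsingular x y, n • Q = Point.some _ _ h ∧ x ≠ 0 := by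
  rcases hnQ : n • Q with _ | @⟨x, y, h⟩
  · exact absurd hnQ (zsmul_ne_zero hQ n hn)
  · refine ⟨x, y, h, rfl, ?_⟩
    rintro rfl
    have hy : y = 0 := by
      have e := ecurve_eq' 0 y h.1
      have : y ^ 2 = 0 := by linarith [e]
      exact pow_eq_zero_iff (n := 2) (by norm_num) |>.mp this
    subst hy
    have hadd : n • Q + n • Q = 0 := by
      rw [hnQ]
      exact Point.add_self_of_Y_eq (by rw [negY_eq]; ring)
    have h2n : (2 * n) • Q = 0 := by rwa [two_mul, add_zsmul]
    exact zsmul_ne_zero hQ (2 * n) (by omega) h2n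

variable (hv : padicValRat t (xCoord Q) ≤ 0)
include hv

lemma even_one_smul : Even (padicValRat t (xCoord ((1 : ℤ) • Q))) := by
  obtain ⟨x, y, h, hform, hx⟩ := exists_form hA hQ 1 one_ne_zero
  rw [hform, xCoord_some]
  have hvx : padicValRat t x ≤ 0 := by
    rw [show (1 : ℤ) • Q = Q from one_smul ℤ Q] at hform
    rwa [hform, xCoord_some] at hv
  rcases dichotomy hA h.1 hx with ⟨_, h2⟩ | ⟨h1, _⟩
  · exact h2
  · omega

lemma even_zsmul : ∀ n : ℤ, n ≠ 0 → Even (padicValRat t (xCoord (n • Q))) := by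
  -- first for positive n by induction
  have key : ∀ m : ℕ, Even (padicValRat t (xCoord (((m : ℤ) + 1) • Q))) := by
    intro m
    induction m with
    | zero => simpa using even_one_smul hA hQ hv
    | succ m ih =>
      push_cast
      obtain ⟨x₁, y₁, h₁, hf₁, hx₁⟩ := exists_form hA hQ ((m : ℤ) + 1) (by omega)
      obtain ⟨x₂, y₂, h₂, hf₂, hx₂⟩ := exists_form hA hQ 1 one_ne_zero
      obtain ⟨x₃, y₃, h₃, hf₃, hx₃⟩ := exists_form hA hQ (((m : ℕ) + 1 : ℤ) + 1) (by omega)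
      have he₁ : Even (padicValRat t x₁) := by rw [hf₁, xCoord_some] at ih; exact ih
      have he₂ : Even (padicValRat t x₂) := by
        have := even_one_smul hA hQ hv
        rwa [hf₂, xCoord_some] at this
      have hsum : (((m : ℕ) + 1 : ℤ) + 1) • Q = Point.some _ _ h₁ + Point.some _ _ h₂ := by
        rw [add_zsmul, hf₁, hf₂]
      have hxy : ¬(x₁ = x₂ ∧ y₁ = (Ecurve A).negY x₂ y₂) := by
        rintro ⟨hx, hy⟩
        have : Point.some _ _ h₁ + Point.some _ _ h₂ = 0 := Point.add_of_Y_eq hx hy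
        rw [← hsum] at this
        exact zsmul_ne_zero hQ _ (by omega) this
      have himp : x₁ = x₂ → y₁ ≠ (Ecurve A).negY x₂ y₂ := fun hx hy => hxy ⟨hx, hy⟩
      have hadd : Point.some _ _ h₁ + Point.some _ _ h₂
          = Point.some _ _ (nonsingular_add h₁ h₂ hxy) := Point.add_some hxy
      have hx3eq : x₃ = (Ecurve A).addX x₁ x₂ ((Ecurve A).slope x₁ x₂ y₁ y₂) := by
        have h' := congrArg xCoord (hf₃.symm.trans (hsum.trans hadd))
        simpa [xCoord_some] using h'
      rw [hf₃, xCoord_some, hx3eq]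
      exact even_addX h₁.1 h₂.1 hxy hx₁ hx₂ (hx3eq ▸ hx₃) he₁ he₂
  intro n hn
  rcases lt_trichotomy n 0 with hc | hc | hc
  · have h1 : n • Q = -((-n) • Q) := by rw [neg_zsmul, neg_neg]
    rw [h1, xCoord_neg]
    have : -n = ((-n - 1).toNat : ℤ) + 1 := by omega
    rw [this]
    exact key _
  · exact absurd hc hn
  · have : n = ((n - 1).toNat : ℤ) + 1 := by omega
    rw [this]
    exact key _

lemma zsmul_le_and_even (n : ℤ) (hn : n ≠ 0) :
    padicValRat t (xCoord (n • Q)) ≤ 0 ∧ Even (padicValRat t (xCoord (n • Q))) := by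
  have he := even_zsmul hA hQ hv n hn
  obtain ⟨x, y, h, hf, hx⟩ := exists_form hA hQ n hn
  rw [hf, xCoord_some] at he ⊢
  exact ⟨even_to_le hA h.1 hx he, he⟩

lemma zsmul_T (hT : (Ecurve A).Nonsingular 0 0) (n : ℤ) (hn : n ≠ 0) :
    1 ≤ padicValRat t (xCoord (n • Q + Point.some _ _ hT)) ∧
      Odd (padicValRat t (xCoord (n • Q + Point.some _ _ hT))) := by
  obtain ⟨x, y, h, hf, hx⟩ := exists_form hA hQ n hn
  have hle := zsmul_le_and_even hA hQ hv n hn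
  rw [hf, xCoord_some] at hle
  rw [hf, addT_x h hT hx]
  have hdiv : padicValRat t (A / x) = 1 - padicValRat t x := by
    rw [padicValRat.div (A_ne_zero hA) hx, hA]
  obtain ⟨hle0, a, ha⟩ := hle
  rw [hdiv]
  exact ⟨by omega, ⟨-a, by omega⟩⟩

end MainInduction

end StmtAux

open StmtAux in
/-- On `E : y² = x³ - 2rDx` with `2rD` square-free, for `Q` of infinite order, `t` an odd
prime dividing `rD` with `v_t(x(Q)) ≤ 0`, and any nonzero integer `k`:
`v_t(x([2k]Q))` and `v_t(x([2k+1]Q))` are nonpositive and even, while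
`v_t(x([2k]Q+T))` and `v_t(x([2k+1]Q+T))` are positive and odd,
where `T = (0,0)`. -/
theorem stmt_10 (r D : ℕ) (hr : 0 < r) (hD : 0 < D) (hsf : Squarefree (2 * r * D))
    (t : ℕ) (ht : t.Prime) (htodd : t ≠ 2) (htdvd : t ∣ r * D)
    (hT : (Ecurve (-(2 * r * D : ℚ))).Nonsingular 0 0)
    (Q : (Ecurve (-(2 * r * D : ℚ))).Point) (hQ : ¬ IsOfFinAddOrder Q)
    (hv : padicValRat t (xCoord Q) ≤ 0) :
    ∀ k : ℤ, k ≠ 0 →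
      (padicValRat t (xCoord ((2 * k) • Q)) ≤ 0 ∧
        Even (padicValRat t (xCoord ((2 * k) • Q)))) ∧
      (padicValRat t (xCoord ((2 * k + 1) • Q)) ≤ 0 ∧
        Even (padicValRat t (xCoord ((2 * k + 1) • Q)))) ∧
      (1 ≤ padicValRat t (xCoord ((2 * k) • Q + .some _ _ hT)) ∧
        Odd (padicValRat t (xCoord ((2 * k) • Q + .some _ _ hT)))) ∧
      (1 ≤ padicValRat t (xCoord ((2 * k + 1) • Q + .some _ _ hT)) ∧
        Odd (padicValRat t (xCoord ((2 * k + 1) • Q + .some _ _ hT)))) := by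
  haveI : Fact t.Prime := ⟨ht⟩
  -- the valuation of A = -(2rD) at t is 1
  have hn0 : 2 * r * D ≠ 0 := by positivity
  have hdvd : t ∣ 2 * r * D := by rw [mul_assoc]; exact Dvd.dvd.mul_left htdvd 2
  have hval1 : padicValNat t (2 * r * D) = 1 := by
    have hle : padicValNat t (2 * r * D) ≤ 1 := by
      have := (Nat.squarefree_iff_factorization_le_one hn0).mp hsf t
      rwa [Nat.factorization_def _ ht] at this
    have hge : 1 ≤ padicValNat t (2 * r * D) :=
      one_le_padicValNat_of_dvd hn0 hdvd
    omega
  have hA : padicValRat t (-(2 * r * D : ℚ)) = 1 := by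
    rw [padicValRat.neg]
    have hcast : ((2 * r * D : ℕ) : ℚ) = (2 * r * D : ℚ) := by push_cast; ring
    rw [← hcast, padicValRat.of_nat, hval1]
    norm_num
  intro k hk
  refine ⟨zsmul_le_and_even hA hQ hv (2 * k) (by omega),
    zsmul_le_and_even hA hQ hv (2 * k + 1) (by omega),
    zsmul_T hA hQ hv hT (2 * k) (by omega),
    zsmul_T hA hQ hv hT (2 * k + 1) (by omega)⟩
end

section
/- Let E : y^2 = x^3 - 2rDx with 2rD square-free, and let P be a point of infinite order in E(Q). Then the canonical height satisfies ĥ(P) ≥ (1/16)·log(4rD). -/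
/-- The naive (Weil) logarithmic height of a rational number `x = a/d²` in lowest terms,
`h = log max {|a|, d²}`. -/
noncomputable def naiveHeight (x : ℚ) : ℝ := Real.log (max (|x.num| : ℝ) (x.den : ℝ))

private lemma coprime_of_prime {a b : ℤ}
    (h : ∀ p : ℕ, p.Prime → (p : ℤ) ∣ a → (p : ℤ) ∣ b → False) :
    Nat.Coprime a.natAbs b.natAbs := by
  by_contra hc
  obtain ⟨p, hp, h1, h2⟩ := Nat.Prime.not_coprime_iff_dvd.mp hc
  exact h p hp (Int.natCast_dvd.mpr h1) (Int.natCast_dvd.mpr h2)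

private lemma rat_num_den {x : ℚ} {a b : ℤ} (hb : 0 < b)
    (hcop : Nat.Coprime a.natAbs b.natAbs) (hx : x = (a : ℚ) / (b : ℚ)) :
    x.num = a ∧ (x.den : ℤ) = b := by
  subst hx
  exact ⟨Rat.num_div_eq_of_coprime hb hcop, Rat.den_div_eq_of_coprime hb hcop⟩

private lemma frac_id (n u s w e : ℚ) (he : e ≠ 0) (hs : s ≠ 0) (hw : w ≠ 0) :
    (((u / e ^ 2) ^ 2 + n) / (2 * ((s / e) * (w / e ^ 2)))) ^ 2 =
      (u ^ 2 + n * (e ^ 2) ^ 2) ^ 2 / (2 * s * w * e) ^ 2 := by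
  field_simp

private lemma key (N : ℕ) (hsfN : Squarefree N) (hN2 : 2 ≤ N) (hN4 : (N : ZMod 4) = 2)
    {x y q : ℚ} (hq : x = q ^ 2) (hx0 : x ≠ 0)
    (hy : y ^ 2 = x ^ 3 - (N : ℚ) * x) (hy0 : y ≠ 0) :
    (x.den : ℤ) ≤ x.num ∧ 16 * (N : ℤ) ≤ x.num ^ 2 ∧
      x.num ^ 4 ≤ (((x ^ 2 + (N : ℚ)) / (2 * y)) ^ 2).num := by
  have hq0 : q ≠ 0 := fun h => hx0 (by simp [hq, h])
  have hs0 : q.num ≠ 0 := Rat.num_ne_zero.mpr hq0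
  have hu : x.num = q.num ^ 2 := by rw [hq]; exact Rat.num_pow q 2
  have hcden : x.den = q.den ^ 2 := by rw [hq]; exact Rat.den_pow q 2
  have hu_pos : 0 < x.num := hu ▸ pow_two_pos_of_ne_zero hs0
  have hce0 : (x.den : ℚ) ≠ 0 := by exact_mod_cast x.den_nz
  have he0 : q.den ≠ 0 := q.den_nz
  -- the rational p with p² = x² - N
  set p : ℚ := y / q with hpdef
  have hp0 : p ≠ 0 := div_ne_zero hy0 hq0
  have hp2 : p ^ 2 = x ^ 2 - (N : ℚ) := by
    have h1 : p ^ 2 = y ^ 2 / x := by rw [hpdef, div_pow, ← hq]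
    rw [h1, hy]
    field_simp
  -- fraction representation of x² - N
  have hfrac : x ^ 2 - (N : ℚ) =
      ((x.num ^ 2 - (N : ℤ) * (x.den : ℤ) ^ 2 : ℤ) : ℚ) / (((x.den : ℤ) ^ 2 : ℤ) : ℚ) := by
    conv_lhs => rw [← Rat.num_div_den x]
    push_cast
    field_simp
  have hcop1 : Nat.Coprime (x.num ^ 2 - (N : ℤ) * (x.den : ℤ) ^ 2).natAbs
      (((x.den : ℤ) ^ 2)).natAbs := by
    apply coprime_of_prime
    intro pp hpp h1 h2
    have hpZ : Prime (pp : ℤ) := Nat.prime_iff_prime_int.mp hpp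
    have hpc : (pp : ℤ) ∣ (x.den : ℤ) := hpZ.dvd_of_dvd_pow h2
    have hpu : (pp : ℤ) ∣ x.num := by
      apply hpZ.dvd_of_dvd_pow (n := 2)
      have h3 : (pp : ℤ) ∣ (N : ℤ) * (x.den : ℤ) ^ 2 :=
        Dvd.dvd.mul_left (dvd_pow hpc two_ne_zero) _
      have := dvd_add h1 h3
      simpa using this
    have hdd : pp ∣ Nat.gcd x.num.natAbs x.den :=
      Nat.dvd_gcd (Int.natCast_dvd.mp hpu) (by simpa using Int.natCast_dvd.mp hpc)
    rw [x.reduced] at hdd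
    exact hpp.one_lt.ne' (Nat.dvd_one.mp hdd)
  have hbpos : (0 : ℤ) < (x.den : ℤ) ^ 2 := by positivity
  obtain ⟨hwnum, hwden⟩ := rat_num_den hbpos hcop1 (hp2.trans hfrac)
  rw [Rat.num_pow] at hwnum
  rw [Rat.den_pow] at hwden
  have hpden : p.den = x.den := by
    have : p.den ^ 2 = x.den ^ 2 := by exact_mod_cast hwden
    exact Nat.pow_left_injective (by norm_num) this
  have hw0 : p.num ≠ 0 := Rat.num_ne_zero.mpr hp0
  -- integer relation : u² = N e⁴ + w²
  have hInt : x.num ^ 2 = (N : ℤ) * (q.den : ℤ) ^ 4 + p.num ^ 2 := by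
    have : (x.den : ℤ) = ((q.den : ℤ)) ^ 2 := by exact_mod_cast hcden
    rw [this] at hwnum
    linarith [hwnum]
  -- q.den is even
  have heven : 2 ∣ q.den := by
    by_contra hodd
    have h14 : q.den % 4 = 1 ∨ q.den % 4 = 3 := by omega
    have hz4 : ((x.num : ZMod 4)) ^ 2 =
        (N : ZMod 4) * ((q.den : ZMod 4)) ^ 4 + ((p.num : ZMod 4)) ^ 2 := by
      have := congrArg (fun z : ℤ => (z : ZMod 4)) hInt
      push_cast at this
      exact_mod_cast this
    rw [hN4] at hz4
    have he4 : (q.den : ZMod 4) = 1 ∨ (q.den : ZMod 4) = 3 := by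
      have : ((q.den % 4 : ℕ) : ZMod 4) = (q.den : ZMod 4) := ZMod.natCast_mod q.den 4 ▸ rfl
      rcases h14 with h | h <;> [left; right] <;> rw [← this, h] <;> decide
    have fact : ∀ a b t : ZMod 4, t = 1 ∨ t = 3 → a ^ 2 ≠ 2 * t ^ 4 + b ^ 2 := by decide
    exact fact _ _ _ he4 hz4
  have he2 : 2 ≤ q.den := by
    rcases heven with ⟨k, hk⟩
    omega
  have hc4 : (4 : ℤ) ≤ (x.den : ℤ) := by
    have : 4 ≤ x.den := by rw [hcden]; nlinarith
    exact_mod_cast this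
  have hNZ : (2 : ℤ) ≤ (N : ℤ) := by exact_mod_cast hN2
  have hw2 : p.num ^ 2 = x.num ^ 2 - (N : ℤ) * (x.den : ℤ) ^ 2 := hwnum
  have hden16 : (16 : ℤ) ≤ (x.den : ℤ) ^ 2 := by
    calc (16 : ℤ) = 4 * 4 := by norm_num
    _ ≤ (x.den : ℤ) * (x.den : ℤ) := mul_le_mul hc4 hc4 (by norm_num) (by linarith)
    _ = (x.den : ℤ) ^ 2 := (sq (x.den : ℤ)).symm
  have h1 : (N : ℤ) * (x.den : ℤ) ^ 2 ≤ x.num ^ 2 := by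
    have := sq_nonneg p.num
    linarith [hw2]
  have h2 : 16 * (N : ℤ) ≤ (N : ℤ) * (x.den : ℤ) ^ 2 := by
    have := mul_le_mul_of_nonneg_left hden16 (by linarith : (0 : ℤ) ≤ (N : ℤ))
    linarith
  have hb2 : 16 * (N : ℤ) ≤ x.num ^ 2 := le_trans h2 h1
  refine ⟨?_, hb2, ?_⟩
  · by_contra hcon
    push_neg at hcon
    have hnn : x.num ^ 2 ≤ (x.den : ℤ) ^ 2 := by
      have := pow_le_pow_left₀ hu_pos.le hcon.le 2
      linarith
    have h3 : 2 * (x.den : ℤ) ^ 2 ≤ (N : ℤ) * (x.den : ℤ) ^ 2 :=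
      mul_le_mul_of_nonneg_right hNZ (by positivity)
    linarith
  · -- part (c)
    have h2c : 2 ∣ x.den := by
      rw [hcden]
      exact Dvd.dvd.trans heven (dvd_pow_self q.den two_ne_zero)
    have hgcd12 : ∀ pp : ℕ, pp.Prime → (pp : ℤ) ∣ x.num → pp ∣ x.den → False := by
      intro pp hpp hdu hdc
      have hdd : pp ∣ Nat.gcd x.num.natAbs x.den :=
        Nat.dvd_gcd (Int.natCast_dvd.mp hdu) hdc
      rw [x.reduced] at hdd
      exact hpp.one_lt.ne' (Nat.dvd_one.mp hdd)
    have hu_odd : ¬ (2 : ℤ) ∣ x.num := fun h2u =>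
      hgcd12 2 Nat.prime_two (by exact_mod_cast h2u) h2c
    set A : ℤ := x.num ^ 2 + (N : ℤ) * (x.den : ℤ) ^ 2 with hAdef
    set B : ℤ := 2 * q.num * p.num * (q.den : ℤ) with hBdef
    have hA_odd : ¬ (2 : ℤ) ∣ A := by
      intro h2A
      have h2den : (2 : ℤ) ∣ (N : ℤ) * (x.den : ℤ) ^ 2 := by
        have : (2 : ℤ) ∣ (x.den : ℤ) := by exact_mod_cast h2c
        exact Dvd.dvd.mul_left (dvd_pow this two_ne_zero) _
      have : (2 : ℤ) ∣ x.num ^ 2 := by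
        have := dvd_sub h2A h2den
        simpa [hAdef] using this
      exact hu_odd (Int.prime_two.dvd_of_dvd_pow this)
    have hcop2 : Nat.Coprime A.natAbs B.natAbs := by
      apply coprime_of_prime
      intro pp hpp h1 h2
      have hpZ : Prime (pp : ℤ) := Nat.prime_iff_prime_int.mp hpp
      by_cases hpp2 : pp = 2
      · exact hA_odd (by exact_mod_cast hpp2 ▸ h1)
      have hodd : ¬ (pp : ℤ) ∣ 2 := by
        intro hd
        exact hpp2 ((Nat.prime_dvd_prime_iff_eq hpp Nat.prime_two).mp
          (by simpa using Int.natCast_dvd.mp hd))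
      -- p ∣ u in all surviving cases, or p ∣ e leading to direct contradiction
      rcases hpZ.dvd_mul.mp h2 with h3 | h3
      · -- pp ∣ 2 * q.num * p.num
        have hdu : (pp : ℤ) ∣ x.num := by
          rcases hpZ.dvd_mul.mp h3 with h4 | h4
          · rcases hpZ.dvd_mul.mp h4 with h5 | h5
            · exact absurd h5 hodd
            · exact hu ▸ Dvd.dvd.trans h5 (dvd_pow_self q.num two_ne_zero)
          · -- pp ∣ p.num ⇒ pp ∣ 2 u²
            have h5 : (pp : ℤ) ∣ p.num ^ 2 := Dvd.dvd.trans h4 (dvd_pow_self p.num two_ne_zero)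
            have h6 : (pp : ℤ) ∣ 2 * x.num ^ 2 := by
              have := dvd_add h1 h5
              rw [hAdef, hw2] at this
              convert this using 1
              · rfl
              ring
            rcases hpZ.dvd_mul.mp h6 with h7 | h7
            · exact absurd h7 hodd
            · exact hpZ.dvd_of_dvd_pow h7
        -- pp ∣ N * den²
        have h8 : (pp : ℤ) ∣ (N : ℤ) * (x.den : ℤ) ^ 2 := by
          have h9 : (pp : ℤ) ∣ x.num ^ 2 := Dvd.dvd.trans hdu (dvd_pow_self x.num two_ne_zero)
          have := dvd_sub h1 h9
          simpa [hAdef] using this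
        have hdcn : ¬ pp ∣ x.den := fun hc => hgcd12 pp hpp hdu hc
        rcases hpZ.dvd_mul.mp h8 with h9 | h9
        swap
        · exact hdcn (by simpa using Int.natCast_dvd.mp (hpZ.dvd_of_dvd_pow h9))
        -- pp ∣ N : use squarefreeness
        have hw' : (pp : ℤ) ∣ p.num := by
          apply hpZ.dvd_of_dvd_pow (n := 2)
          rw [hw2]
          exact dvd_sub (Dvd.dvd.trans hdu (dvd_pow_self x.num two_ne_zero)) h8
        have hsq : (pp : ℤ) ^ 2 ∣ (N : ℤ) * (x.den : ℤ) ^ 2 := by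
          have hx2 : (pp : ℤ) ^ 2 ∣ x.num ^ 2 := pow_dvd_pow_of_dvd hdu 2
          have hw2' : (pp : ℤ) ^ 2 ∣ p.num ^ 2 := pow_dvd_pow_of_dvd hw' 2
          have := dvd_sub hx2 hw2'
          rw [hw2] at this
          convert this using 1
          · rfl
          ring
        have hsqn : pp ^ 2 ∣ N * x.den ^ 2 := by exact_mod_cast hsq
        have hppc : Nat.Coprime (pp ^ 2) (x.den ^ 2) :=
          ((Nat.Prime.coprime_iff_not_dvd hpp).mpr hdcn).pow 2 2
        have hppN : pp ^ 2 ∣ N := hppc.dvd_of_dvd_mul_right hsqn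
        have : IsUnit pp := hsfN pp (by simpa [pow_two] using hppN)
        exact hpp.one_lt.ne' (Nat.isUnit_iff.mp this)
      · -- pp ∣ q.den
        have hdc : pp ∣ x.den := by
          rw [hcden]
          exact Dvd.dvd.trans (by simpa using Int.natCast_dvd.mp h3)
            (dvd_pow_self q.den two_ne_zero)
        have hdcZ : (pp : ℤ) ∣ (N : ℤ) * (x.den : ℤ) ^ 2 := by
          have : (pp : ℤ) ∣ (x.den : ℤ) := by exact_mod_cast hdc
          exact Dvd.dvd.mul_left (dvd_pow this two_ne_zero) _
        have hdu : (pp : ℤ) ∣ x.num := by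
          apply hpZ.dvd_of_dvd_pow (n := 2)
          have := dvd_sub h1 hdcZ
          simpa [hAdef] using this
        exact hgcd12 pp hpp hdu hdc
    -- the representation of the doubled x-coordinate
    have hB0 : B ≠ 0 := by
      rw [hBdef]
      refine mul_ne_zero (mul_ne_zero (mul_ne_zero two_ne_zero hs0) hw0) ?_
      exact_mod_cast he0
    have hBpos : (0 : ℤ) < B ^ 2 := by positivity
    have hxr : x = (x.num : ℚ) / (x.den : ℚ) := (Rat.num_div_den x).symm
    have hqr : q = (q.num : ℚ) / (q.den : ℚ) := (Rat.num_div_den q).symm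
    have hpr : p = (p.num : ℚ) / (x.den : ℚ) := by
      conv_lhs => rw [← Rat.num_div_den p]
      rw [hpden]
    have hcq : (x.den : ℚ) = (q.den : ℚ) ^ 2 := by exact_mod_cast hcden
    have hyqp : (y - q * p) * (y + q * p) = 0 := by
      have hqp2 : (q * p) ^ 2 = x ^ 3 - (N : ℚ) * x := by
        rw [mul_pow, hp2, hq]
        ring
      linear_combination hy - hqp2
    have hqe0 : (q.den : ℚ) ≠ 0 := by exact_mod_cast he0
    have hqs0 : ((q.num : ℤ) : ℚ) ≠ 0 := Int.cast_ne_zero.mpr hs0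
    have hqw0 : ((p.num : ℤ) : ℚ) ≠ 0 := Int.cast_ne_zero.mpr hw0
    have hz : ((x ^ 2 + (N : ℚ)) / (2 * y)) ^ 2 = ((A ^ 2 : ℤ) : ℚ) / ((B ^ 2 : ℤ) : ℚ) := by
      have hmain : ((x ^ 2 + (N : ℚ)) / (2 * (q * p))) ^ 2 =
          ((A ^ 2 : ℤ) : ℚ) / ((B ^ 2 : ℤ) : ℚ) := by
        have e1 : ((A ^ 2 : ℤ) : ℚ) =
            (((x.num : ℤ) : ℚ) ^ 2 + (N : ℚ) * (((q.den : ℚ)) ^ 2) ^ 2) ^ 2 := by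
          rw [hAdef]; push_cast [hcq]; ring
        have e2 : ((B ^ 2 : ℤ) : ℚ) =
            (2 * ((q.num : ℤ) : ℚ) * ((p.num : ℤ) : ℚ) * (q.den : ℚ)) ^ 2 := by
          rw [hBdef]; push_cast; ring
        rw [e1, e2]
        conv_lhs => rw [hxr, hpr, hqr, hcq]
        exact frac_id _ _ _ _ _ hqe0 hqs0 hqw0
      rcases mul_eq_zero.mp hyqp with hc | hc
      · have hyv : y = q * p := by linarith [sub_eq_zero.mp hc]
        rw [hyv]; exact hmain
      · have hyv : y = -(q * p) := by linarith [add_eq_zero_iff_eq_neg.mp hc]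
        rw [hyv, show (2 : ℚ) * -(q * p) = -(2 * (q * p)) by ring, div_neg, neg_sq]
        exact hmain
    obtain ⟨hnum', _⟩ := rat_num_den hBpos (by
      simpa [Int.natAbs_pow] using hcop2.pow 2 2) hz
    rw [hnum']
    have hA1 : x.num ^ 2 ≤ A := by
      rw [hAdef]
      have : (0 : ℤ) ≤ (N : ℤ) * (x.den : ℤ) ^ 2 := by positivity
      linarith
    calc x.num ^ 4 = (x.num ^ 2) ^ 2 := by ring
    _ ≤ A ^ 2 := pow_le_pow_left₀ (sq_nonneg x.num) hA1 2

private lemma xCoord_some {A : ℚ} {x y : ℚ} (h : (Ecurve A).Nonsingular x y) :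
    xCoord (WeierstrassCurve.Affine.Point.some _ _ h) = x := rfl

private lemma negY_eq {A : ℚ} (x y : ℚ) : (Ecurve A).negY x y = -y := by
  simp [WeierstrassCurve.Affine.negY, Ecurve]

private lemma equation_eq {A : ℚ} {x y : ℚ} (h : (Ecurve A).Nonsingular x y) :
    y ^ 2 = x ^ 3 + A * x := by
  have := ((Ecurve A).equation_iff x y).mp h.1
  simpa [Ecurve] using this

private lemma xCoord_double {A : ℚ} {x y : ℚ} (h : (Ecurve A).Nonsingular x y) (hy0 : y ≠ 0) :
    xCoord (WeierstrassCurve.Affine.Point.some _ _ h + WeierstrassCurve.Affine.Point.some _ _ h)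
      = ((x ^ 2 - A) / (2 * y)) ^ 2 := by
  have heq : y ^ 2 = x ^ 3 + A * x := equation_eq h
  have hy_ne : y ≠ (Ecurve A).negY x y := by
    rw [negY_eq]
    intro hcon
    exact hy0 (by linarith)
  rw [WeierstrassCurve.Affine.Point.add_self_of_Y_ne hy_ne, xCoord_some,
    WeierstrassCurve.Affine.addX, WeierstrassCurve.Affine.slope_of_Y_ne rfl hy_ne, negY_eq]
  have ha1 : (Ecurve A).a₁ = 0 := rfl
  have ha2 : (Ecurve A).a₂ = 0 := rfl
  have ha4 : (Ecurve A).a₄ = A := rfl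
  rw [ha1, ha2, ha4]
  have h1 : y - -y = 2 * y := by ring
  rw [h1]
  field_simp
  linear_combination (-8 * x) * heq

private lemma point_struct {A : ℚ} (Q : (Ecurve A).Point) (hQ : Q ≠ 0) (hQQ : Q + Q ≠ 0) :
    ∃ (x y : ℚ) (h : (Ecurve A).Nonsingular x y), Q = .some _ _ h ∧ y ≠ 0 ∧ x ≠ 0 ∧
      y ^ 2 = x ^ 3 + A * x := by
  induction Q with
  | zero => exact absurd rfl hQ
  | @some x y h =>
    have heq : y ^ 2 = x ^ 3 + A * x := equation_eq h
    have hy0 : y ≠ 0 := by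
      intro hy
      apply hQQ
      exact WeierstrassCurve.Affine.Point.add_self_of_Y_eq (by rw [negY_eq, hy, neg_zero])
    have hx0 : x ≠ 0 := by
      intro hx
      apply hy0
      have : y ^ 2 = 0 := by rw [heq, hx]; ring
      exact pow_eq_zero_iff two_ne_zero |>.mp this
    exact ⟨x, y, h, rfl, hy0, hx0, heq⟩

/-- On `E : y² = x³ - 2rDx` with `2rD` square-free, the Néron–Tate canonical height
(normalized so that `ĥ(P) = lim (1/2)·h(x([2ⁿ]P))/4ⁿ`) of any point `P ∈ E(ℚ)` of
infinite order satisfies `ĥ(P) ≥ (1/16)·log(4rD)`. -/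
theorem stmt_14 (r D : ℕ) (hr : 0 < r) (hD : 0 < D) (hsf : Squarefree (2 * r * D))
    (P : (Ecurve (-(2 * r * D : ℚ))).Point) (hP : ¬ IsOfFinAddOrder P)
    (hhat : ℝ)
    (hlim : Filter.Tendsto
      (fun n : ℕ => naiveHeight (xCoord ((2 ^ n : ℤ) • P)) / 2 / 4 ^ n)
      Filter.atTop (nhds hhat)) :
    (1 / 16 : ℝ) * Real.log (4 * r * D) ≤ hhat := by
  set N : ℕ := 2 * r * D with hNdef
  have hrD : 1 ≤ r * D := Nat.one_le_iff_ne_zero.mpr (Nat.mul_ne_zero hr.ne' hD.ne')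
  have hN2 : 2 ≤ N := by
    calc 2 = 2 * 1 := rfl
    _ ≤ 2 * (r * D) := Nat.mul_le_mul_left _ hrD
    _ = N := by rw [hNdef, mul_assoc]
  have hN4 : (N : ZMod 4) = 2 := by
    have h4 : ¬ (4 ∣ N) := by
      intro h4
      have h4' : 2 * 2 ∣ N := by omega
      have := hsf 2 h4'
      rw [Nat.isUnit_iff] at this
      omega
    have h2 : 2 ∣ N := ⟨r * D, by rw [hNdef]; ring⟩
    have hmod : N % 4 = 2 := by omega
    have : ((N % 4 : ℕ) : ZMod 4) = (N : ZMod 4) := ZMod.natCast_mod N 4 ▸ rfl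
    rw [← this, hmod]
    decide
  have hA : -(2 * (r : ℚ) * (D : ℚ)) = -(N : ℚ) := by push_cast [hNdef]; ring
  -- nonvanishing of 2-power multiples
  have hsmul0 : ∀ n : ℕ, (2 ^ n : ℤ) • P ≠ 0 := by
    intro n h0
    apply hP
    rw [isOfFinAddOrder_iff_nsmul_eq_zero]
    refine ⟨2 ^ n, Nat.pow_pos (by norm_num), ?_⟩
    rw [show ((2 : ℤ) ^ n) = ((2 ^ n : ℕ) : ℤ) by push_cast; ring] at h0
    rwa [natCast_zsmul] at h0
  have hQsucc : ∀ n : ℕ, (2 ^ (n + 1) : ℤ) • P = (2 ^ n : ℤ) • P + (2 ^ n : ℤ) • P := by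
    intro n
    rw [show (2 ^ (n + 1) : ℤ) = 2 * 2 ^ n by ring, mul_smul, two_zsmul]
  have hstruct : ∀ n : ℕ, ∃ (x y : ℚ) (h : (Ecurve (-(2 * r * D : ℚ))).Nonsingular x y),
      (2 ^ n : ℤ) • P = .some _ _ h ∧ y ≠ 0 ∧ x ≠ 0 ∧
      y ^ 2 = x ^ 3 + (-(2 * (r : ℚ) * (D : ℚ))) * x := by
    intro n
    exact point_struct _ (hsmul0 n) (by rw [← hQsucc n]; exact hsmul0 (n + 1))
  set f : ℕ → ℝ := fun n => naiveHeight (xCoord ((2 ^ n : ℤ) • P)) with hfdef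
  -- main per-index analysis
  have analysis : ∀ n : ℕ, ((1 / 2 : ℝ) * Real.log (16 * N) ≤ f (n + 1)) ∧
      4 * f (n + 1) ≤ f (n + 2) := by
    intro n
    obtain ⟨x0, y0, h0, hsome0, hy0, hx0, heq0⟩ := hstruct n
    obtain ⟨x1, y1, h1, hsome1, hy1, hx1, heq1⟩ := hstruct (n + 1)
    obtain ⟨x2, y2, h2, hsome2, hy2, hx2, heq2⟩ := hstruct (n + 2)
    have e1 : xCoord ((2 ^ (n + 1) : ℤ) • P) = x1 := by rw [hsome1]; rfl
    have e2 : xCoord ((2 ^ (n + 1) : ℤ) • P)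
        = ((x0 ^ 2 - (-(2 * (r : ℚ) * (D : ℚ)))) / (2 * y0)) ^ 2 := by
      rw [hQsucc n, hsome0]
      exact xCoord_double h0 hy0
    have hq1 : x1 = ((x0 ^ 2 - (-(2 * (r : ℚ) * (D : ℚ)))) / (2 * y0)) ^ 2 :=
      e1.symm.trans e2
    have heq1' : y1 ^ 2 = x1 ^ 3 - (N : ℚ) * x1 := by rw [heq1, hA]; ring
    obtain ⟨k1, k2, k3⟩ := key N hsf hN2 hN4 hq1 hx1 heq1' hy1
    -- positivity facts
    have hdpos : (0 : ℤ) < (x1.den : ℤ) := by exact_mod_cast x1.pos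
    have hupos : (0 : ℤ) < x1.num := lt_of_lt_of_le hdpos k1
    have hupR : (0 : ℝ) < ((x1.num : ℤ) : ℝ) := by exact_mod_cast hupos
    have habs : |((x1.num : ℤ) : ℝ)| = ((x1.num : ℤ) : ℝ) := abs_of_pos hupR
    have hf1 : f (n + 1) = Real.log ((x1.num : ℤ) : ℝ) := by
      show naiveHeight (xCoord ((2 ^ (n + 1) : ℤ) • P)) = _
      rw [e1, naiveHeight, habs, max_eq_left (by exact_mod_cast k1)]
    constructor
    · -- part 1
      rw [hf1]
      have hlog : Real.log ((16 * N : ℤ) : ℝ) ≤ Real.log (((x1.num ^ 2 : ℤ) : ℝ)) := by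
        apply Real.log_le_log
        · have : (0 : ℤ) < 16 * N := by positivity
          exact_mod_cast this
        · exact_mod_cast k2
      have : ((x1.num ^ 2 : ℤ) : ℝ) = ((x1.num : ℤ) : ℝ) ^ 2 := by push_cast; ring
      rw [this, Real.log_pow] at hlog
      have h16 : ((16 * N : ℤ) : ℝ) = (16 * N : ℝ) := by push_cast; ring
      rw [h16] at hlog
      push_cast at hlog ⊢
      linarith
    · -- part 2
      have e3 : xCoord ((2 ^ (n + 2) : ℤ) • P)
          = ((x1 ^ 2 - (-(2 * (r : ℚ) * (D : ℚ)))) / (2 * y1)) ^ 2 := by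
        rw [hQsucc (n + 1), hsome1]
        exact xCoord_double h1 hy1
      have e4 : ((x1 ^ 2 - (-(2 * (r : ℚ) * (D : ℚ)))) / (2 * y1)) ^ 2
          = ((x1 ^ 2 + (N : ℚ)) / (2 * y1)) ^ 2 := by rw [hA]; ring
      have hnum2 : x1.num ^ 4 ≤ (xCoord ((2 ^ (n + 2) : ℤ) • P)).num := by
        rw [e3, e4]; exact k3
      have hfn2 : f (n + 2) = naiveHeight (xCoord ((2 ^ (n + 2) : ℤ) • P)) := rfl
      rw [hfn2, naiveHeight, hf1]
      have hu4pos : (0 : ℝ) < ((x1.num : ℤ) : ℝ) ^ 4 := by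
        have : (0 : ℝ) < ((x1.num : ℤ) : ℝ) := by exact_mod_cast hupos
        positivity
      have hle : ((x1.num : ℤ) : ℝ) ^ 4 ≤
          max (|(xCoord ((2 ^ (n + 2) : ℤ) • P)).num| : ℝ) ((xCoord ((2 ^ (n + 2) : ℤ) • P)).den : ℝ) := by
        refine le_trans ?_ (le_max_left _ _)
        have h5 : ((x1.num ^ 4 : ℤ) : ℝ) ≤ ((xCoord ((2 ^ (n + 2) : ℤ) • P)).num : ℝ) := by
          exact_mod_cast hnum2
        refine le_trans ?_ (le_trans h5 ?_)
        · push_cast; ring_nf; exact le_refl _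
        · have := le_abs_self ((xCoord ((2 ^ (n + 2) : ℤ) • P)).num : ℝ)
          exact_mod_cast this
      have := Real.log_le_log hu4pos hle
      rw [Real.log_pow] at this
      push_cast at this ⊢
      linarith
  -- iterate the doubling inequality
  have chain : ∀ m : ℕ, (4 : ℝ) ^ m * f 1 ≤ f (m + 1) := by
    intro m
    induction m with
    | zero => simp
    | succ k ih =>
      have h4 : (4 : ℝ) ^ (k + 1) * f 1 = 4 * ((4 : ℝ) ^ k * f 1) := by ring
      rw [h4]
      calc 4 * ((4 : ℝ) ^ k * f 1) ≤ 4 * f (k + 1) := by linarith [ih]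
      _ ≤ f (k + 2) := (analysis k).2
  have hf1pos : (1 / 2 : ℝ) * Real.log (16 * N) ≤ f 1 := (analysis 0).1
  have hlogN : (0 : ℝ) ≤ Real.log (16 * N) := by
    apply Real.log_nonneg
    have : (1 : ℝ) ≤ (N : ℝ) := by exact_mod_cast le_trans (by norm_num) hN2
    nlinarith
  have hf1nonneg : 0 ≤ f 1 := le_trans (by nlinarith) hf1pos
  have hev : ∀ᶠ n in Filter.atTop,
      f 1 / 8 ≤ naiveHeight (xCoord ((2 ^ n : ℤ) • P)) / 2 / 4 ^ n := by
    filter_upwards [Filter.eventually_ge_atTop 1] with n hn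
    obtain ⟨m, rfl⟩ : ∃ m, n = m + 1 := ⟨n - 1, by omega⟩
    have h1 := chain m
    have hfn : naiveHeight (xCoord ((2 ^ (m + 1) : ℤ) • P)) = f (m + 1) := rfl
    rw [hfn, div_div, div_le_div_iff₀ (by norm_num) (by positivity)]
    have h4 : (4 : ℝ) ^ (m + 1) = 4 * 4 ^ m := by ring
    rw [h4]
    nlinarith [h1]
  have hge : f 1 / 8 ≤ hhat := ge_of_tendsto hlim hev
  -- conclude
  have hfinal : (1 / 16 : ℝ) * Real.log (4 * r * D) ≤ f 1 / 8 := by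
    have hlog2 : Real.log (4 * (r : ℝ) * (D : ℝ)) ≤ Real.log (16 * N) := by
      apply Real.log_le_log
      · have hr' : (0 : ℝ) < (r : ℝ) := by exact_mod_cast hr
        have hD' : (0 : ℝ) < (D : ℝ) := by exact_mod_cast hD
        positivity
      · have : (N : ℝ) = 2 * r * D := by rw [hNdef]; push_cast; ring
        rw [this]
        have hr' : (1 : ℝ) ≤ (r : ℝ) := by exact_mod_cast hr
        have hD' : (1 : ℝ) ≤ (D : ℝ) := by exact_mod_cast hD
        nlinarith
    nlinarith
  linarith
end

section
/- Let E : y^2 = x^3 - 2rDx with 2rD square-free and let P be a point of infinite order in E(Q). Then the difference between the canonical and Weil heights satisfies -(1/4)·log(4rD) ≤ ĥ(P) - (1/2)·h(P) ≤ (1/4)·log(2rD+1) + (1/12)·log 2, where h(P) = log max{|a|, d^2} for x(P) = a/d^2 in lowest terms. -/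
/-! ### Auxiliary lemmas -/

section Aux

open WeierstrassCurve.Affine

lemma double_xCoord {A : ℚ} (Q : (Ecurve A).Point) (h0 : Q ≠ 0) (h2 : Q + Q ≠ 0) :
    ∃ y : ℚ, y ≠ 0 ∧ y ^ 2 = (xCoord Q) ^ 3 + A * (xCoord Q) ∧
      xCoord (Q + Q) = ((xCoord Q) ^ 2 - A) ^ 2 / (4 * ((xCoord Q) ^ 3 + A * (xCoord Q))) := by
  cases Q with
  | zero => exact absurd rfl h0
  | @some x y h =>
    have hx : xCoord (WeierstrassCurve.Affine.Point.some x y h) = x := rfl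
    have heq : y ^ 2 = x ^ 3 + A * x := by
      have := ((Ecurve A).equation_iff x y).mp h.1
      simpa [Ecurve] using this
    have hy0 : y ≠ 0 := by
      intro hy
      apply h2
      apply WeierstrassCurve.Affine.Point.add_self_of_Y_eq
      simp [WeierstrassCurve.Affine.negY, Ecurve, hy]
    have hneg : (Ecurve A).negY x y = -y := by
      simp [WeierstrassCurve.Affine.negY, Ecurve]
    have hyne : y ≠ (Ecurve A).negY x y := by
      rw [hneg]
      intro hy
      exact hy0 (by linarith [hy])
    refine ⟨y, hy0, heq, ?_⟩
    rw [hx, WeierstrassCurve.Affine.Point.add_self_of_Y_ne hyne]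
    show (Ecurve A).addX x x ((Ecurve A).slope x x y y) = _
    rw [WeierstrassCurve.Affine.slope_of_Y_ne rfl hyne, hneg]
    simp only [WeierstrassCurve.Affine.addX,
      show (Ecurve A).a₁ = 0 from rfl, show (Ecurve A).a₂ = 0 from rfl,
      show (Ecurve A).a₄ = A from rfl]
    rw [← heq]
    have h2y : y - -y = 2 * y := by ring
    rw [h2y]
    field_simp
    first
    | linear_combination (4*y^2)*(8*x)*heq
    | linear_combination (8*x)*heq
    | linear_combination (-8*x)*heq
    | linear_combination (4*y^2)*(-8*x)*heq
    | linear_combination (32*x*y^2)*heq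
    | linear_combination (-32*x*y^2)*heq
    | linear_combination (-32*x)*heq

lemma rat_isCoprime (q : ℚ) : IsCoprime q.num (q.den : ℤ) := by
  rw [Int.isCoprime_iff_gcd_eq_one, Int.gcd]
  simpa using q.reduced

lemma rat_num_den_mul (q : ℚ) (m v : ℤ) (hv : (v:ℚ) ≠ 0) (hq : q = (m:ℚ)/(v:ℚ)) :
    q.num * v = m * (q.den : ℤ) := by
  have hden0 : (q.den : ℚ) ≠ 0 := by exact_mod_cast q.den_nz
  have h : (q.num : ℚ) / (q.den : ℚ) = (m:ℚ)/(v:ℚ) := by rw [Rat.num_div_den, hq]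
  have h2 := (div_eq_div_iff hden0 hv).mp h
  exact_mod_cast h2

lemma rat_div_exists (m v : ℤ) (hv : 0 < v) :
    ∃ k : ℤ, 0 < k ∧ m = ((m : ℚ) / (v : ℚ)).num * k ∧
      v = (((m : ℚ) / (v : ℚ)).den : ℤ) * k := by
  have hv0 : (v : ℚ) ≠ 0 := by exact_mod_cast hv.ne'
  generalize hqdef : ((m : ℚ) / (v : ℚ)) = q
  have h1' := rat_num_den_mul q m v hv0 hqdef.symm
  have hcop : IsCoprime ((q.den : ℤ)) q.num := (rat_isCoprime q).symm
  have hdvd : (q.den : ℤ) ∣ v := by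
    apply hcop.dvd_of_dvd_mul_right
    exact ⟨m, by linarith [h1']⟩
  obtain ⟨k, hk⟩ := hdvd
  have hdpos : (0 : ℤ) < (q.den : ℤ) := by exact_mod_cast q.pos
  have hkpos : 0 < k := by nlinarith [hk]
  refine ⟨k, hkpos, ?_, hk⟩
  have h2 : (q.den : ℤ) * m = (q.den : ℤ) * (q.num * k) := by
    rw [hk] at h1'
    linarith [h1']
  have h3 := mul_left_cancel₀ hdpos.ne' h2
  linarith [h3]

lemma sq_dvd_of_cube_dvd_sq {p s : ℤ} (hp : Prime p) (h : p ^ 3 ∣ s ^ 2) : p ^ 2 ∣ s := by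
  have hps : p ∣ s := hp.dvd_of_dvd_pow (dvd_trans (dvd_pow_self p (by norm_num)) h)
  obtain ⟨t, ht⟩ := hps
  have h2 : p ^ 3 ∣ p ^ 2 * t ^ 2 := by
    rw [show p ^ 2 * t ^ 2 = s ^ 2 by rw [ht]; ring]
    exact h
  have h3 : p ∣ t ^ 2 := by
    have hpne : p ^ 2 ≠ 0 := pow_ne_zero 2 hp.ne_zero
    rcases h2 with ⟨u, hu⟩
    refine ⟨u, ?_⟩
    apply mul_left_cancel₀ hpne
    rw [hu]; ring
  obtain ⟨u, hu⟩ := hp.dvd_of_dvd_pow h3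
  exact ⟨u, by rw [ht, hu]; ring⟩

section NT
variable {a Dz B s a' Dz' k N : ℤ}

lemma NT_main (hcop : IsCoprime a Dz)
    (hs : s = a ^ 2 + N * Dz ^ 2) (hB : B = a ^ 3 - N * a * Dz ^ 2)
    (hk1 : s ^ 2 = a' * k) (hk2 : 4 * Dz * B = Dz' * k)
    (hNsf : Squarefree N) (hN2 : (2 : ℤ) ∣ N)
    {p : ℤ} (hp : Prime p) (hpk : p ∣ k) :
    p ∣ a ∧ p ∣ N ∧ ¬ p ^ 3 ∣ k := by
  have hks : k ∣ s ^ 2 := ⟨a', by linarith [hk1]⟩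
  have hkd : k ∣ 4 * Dz * B := ⟨Dz', by linarith [hk2]⟩
  have hpss : p ∣ s := hp.dvd_of_dvd_pow (hpk.trans hks)
  have hpDz : ¬ p ∣ Dz := by
    intro hpD
    have hpa2 : p ∣ a ^ 2 := by
      have hnd : p ∣ N * Dz ^ 2 :=
        Dvd.dvd.mul_left (hpD.trans (dvd_pow_self Dz (by norm_num))) N
      have h := dvd_sub hpss hnd
      rw [hs] at h
      simpa using h
    exact hp.not_unit (hcop.isUnit_of_dvd' (hp.dvd_of_dvd_pow hpa2) hpD)
  have hpa : p ∣ a := by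
    by_contra hpa
    have hp4DB : p ∣ 4 * Dz * B := hpk.trans hkd
    have hpN : p ∣ N := by
      by_cases hp2 : p ∣ 2
      · exact hp2.trans hN2
      · have hp4 : ¬ p ∣ (4 : ℤ) := by
          intro h4
          rw [show (4 : ℤ) = 2 * 2 by norm_num] at h4
          rcases hp.dvd_mul.mp h4 with h | h <;> exact hp2 h
        have hpB : p ∣ B := by
          rcases hp.dvd_mul.mp hp4DB with h | h
          · rcases hp.dvd_mul.mp h with h' | h'
            · exact absurd h' hp4
            · exact absurd h' hpDz
          · exact h
        rw [hB, show a ^ 3 - N * a * Dz ^ 2 = a * (a ^ 2 - N * Dz ^ 2) by ring] at hpB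
        rcases hp.dvd_mul.mp hpB with h | h
        · exact absurd h hpa
        · have hdiff := dvd_sub hpss h
          rw [hs, show a ^ 2 + N * Dz ^ 2 - (a ^ 2 - N * Dz ^ 2) = 2 * (N * Dz ^ 2) by ring]
            at hdiff
          rcases hp.dvd_mul.mp hdiff with h' | h'
          · exact absurd h' hp2
          · rcases hp.dvd_mul.mp h' with h'' | h''
            · exact h''
            · exact absurd (hp.dvd_of_dvd_pow h'') hpDz
    have : p ∣ a ^ 2 := by
      have h2 : p ∣ N * Dz ^ 2 := Dvd.dvd.mul_right hpN _
      have h := dvd_sub hpss h2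
      rw [hs] at h
      simpa using h
    exact hpa (hp.dvd_of_dvd_pow this)
  have hpN : p ∣ N := by
    have hpa2 : p ∣ a ^ 2 := hpa.trans (dvd_pow_self a (by norm_num))
    have h := dvd_sub hpss hpa2
    rw [hs, show a ^ 2 + N * Dz ^ 2 - a ^ 2 = N * Dz ^ 2 by ring] at h
    rcases hp.dvd_mul.mp h with h' | h'
    · exact h'
    · exact absurd (hp.dvd_of_dvd_pow h') hpDz
  refine ⟨hpa, hpN, ?_⟩
  intro hp3
  have hp2s : p ^ 2 ∣ s := sq_dvd_of_cube_dvd_sq hp (hp3.trans hks)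
  have hp2a : p ^ 2 ∣ a ^ 2 := by
    rcases hpa with ⟨c, hc⟩
    exact ⟨c ^ 2, by rw [hc]; ring⟩
  have hp2N : p ^ 2 ∣ N * Dz ^ 2 := by
    have h := dvd_sub hp2s hp2a
    rw [hs] at h
    simpa using h
  have hp2N' : p ^ 2 ∣ N := by
    refine hp.pow_dvd_of_dvd_mul_right 2 ?_ hp2N
    intro hpD2
    exact hpDz (hp.dvd_of_dvd_pow hpD2)
  exact hp.not_unit (hNsf p (by rcases hp2N' with ⟨c, hc⟩; exact ⟨c, by rw [hc]; ring⟩))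

lemma NT_next (hcop : IsCoprime a Dz)
    (hs : s = a ^ 2 + N * Dz ^ 2) (hB : B = a ^ 3 - N * a * Dz ^ 2)
    (hk1 : s ^ 2 = a' * k)
    (hgcd : ∀ c : ℤ, c ∣ s ^ 2 → c ∣ 4 * Dz * B → c ∣ k)
    (hNsf : Squarefree N)
    {p : ℤ} (hp : Prime p) (hpN : p ∣ N) : ¬ p ∣ a' := by
  intro hpa'
  by_cases hpa : p ∣ a
  · have hpDz : ¬ p ∣ Dz := fun hpD => hp.not_unit (hcop.isUnit_of_dvd' hpa hpD)
    have hps : p ∣ s := by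
      rw [hs]
      exact dvd_add (hpa.trans (dvd_pow_self a (by norm_num))) (Dvd.dvd.mul_right hpN _)
    have hp2s2 : p ^ 2 ∣ s ^ 2 := by
      rcases hps with ⟨c, hc⟩
      exact ⟨c ^ 2, by rw [hc]; ring⟩
    have hp24DB : p ^ 2 ∣ 4 * Dz * B := by
      by_cases hp2 : p ∣ 2
      · have h4 : p ^ 2 ∣ (4 : ℤ) := by
          rcases hp2 with ⟨c, hc⟩
          exact ⟨c ^ 2, by rw [show (4:ℤ) = 2 * 2 by norm_num, hc]; ring⟩
        exact h4.trans ⟨Dz * B, by ring⟩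
      · have h1 : p ∣ a ^ 2 - N * Dz ^ 2 := by
          have ha2 : p ∣ a ^ 2 := hpa.trans (dvd_pow_self a (by norm_num))
          exact dvd_sub ha2 (Dvd.dvd.mul_right hpN _)
        have h2 : p ^ 2 ∣ a * (a ^ 2 - N * Dz ^ 2) := by
          rw [sq]
          exact mul_dvd_mul hpa h1
        rw [hB, show a ^ 3 - N * a * Dz ^ 2 = a * (a ^ 2 - N * Dz ^ 2) by ring]
        exact h2.mul_left _
    have hp2k : p ^ 2 ∣ k := hgcd _ hp2s2 hp24DB
    have hp3s2 : p ^ 3 ∣ s ^ 2 := by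
      rw [hk1]
      rcases hpa' with ⟨c, hc⟩
      rcases hp2k with ⟨e, he⟩
      exact ⟨c * e, by rw [hc, he]; ring⟩
    have hp2s : p ^ 2 ∣ s := sq_dvd_of_cube_dvd_sq hp hp3s2
    have hp2a : p ^ 2 ∣ a ^ 2 := by
      rcases hpa with ⟨c, hc⟩
      exact ⟨c ^ 2, by rw [hc]; ring⟩
    have hp2N : p ^ 2 ∣ N * Dz ^ 2 := by
      have h := dvd_sub hp2s hp2a
      rw [hs] at h
      simpa using h
    have hp2N' : p ^ 2 ∣ N := by
      refine hp.pow_dvd_of_dvd_mul_right 2 ?_ hp2N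
      intro hpD2
      exact hpDz (hp.dvd_of_dvd_pow hpD2)
    exact hp.not_unit (hNsf p (by rcases hp2N' with ⟨c, hc⟩; exact ⟨c, by rw [hc]; ring⟩))
  · have hps : ¬ p ∣ s := by
      intro hps
      have hnd : p ∣ N * Dz ^ 2 := Dvd.dvd.mul_right hpN _
      have h := dvd_sub hps hnd
      rw [hs, show a ^ 2 + N * Dz ^ 2 - N * Dz ^ 2 = a ^ 2 by ring] at h
      exact hpa (hp.dvd_of_dvd_pow h)
    refine hps (hp.dvd_of_dvd_pow (show p ∣ s ^ 2 from ?_))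
    rw [hk1]
    exact hpa'.mul_right k

end NT

lemma dvd_sq_of_forall_prime {K M : ℕ} (hK : K ≠ 0) (hM : M ≠ 0)
    (h : ∀ p : ℕ, p.Prime → p ∣ K → p ∣ M ∧ ¬ p ^ 3 ∣ K) : K ∣ M ^ 2 := by
  rw [← Nat.factorization_le_iff_dvd hK (pow_ne_zero 2 hM)]
  rw [Finsupp.le_def]
  intro p
  by_cases hp : p.Prime
  · by_cases hpK : p ∣ K
    · obtain ⟨hpM, hp3⟩ := h p hp hpK
      have h2 : K.factorization p ≤ 2 := by
        by_contra hgt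
        push_neg at hgt
        exact hp3 ((Nat.Prime.pow_dvd_iff_le_factorization hp hK).mpr hgt)
      have hM1 : 1 ≤ M.factorization p := Nat.Prime.factorization_pos_of_dvd hp hM hpM
      rw [Nat.factorization_pow]
      simp only [Finsupp.smul_apply, smul_eq_mul]
      omega
    · rw [Nat.factorization_eq_zero_of_not_dvd hpK]; exact Nat.zero_le _
  · rw [Nat.factorization_eq_zero_of_not_prime K hp]; exact Nat.zero_le _

lemma geom_closed (n : ℕ) :
    ∑ j ∈ Finset.range n, ((1 : ℝ)/4) ^ (j+1) = (1 - (1/4) ^ n)/3 := by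
  induction n with
  | zero => simp
  | succ n ih =>
    rw [Finset.sum_range_succ, ih, pow_succ]
    ring

lemma telescope_sum (ψ : ℕ → ℝ) (n : ℕ) :
    ψ n / 4 ^ n - ψ 0 = ∑ j ∈ Finset.range n, (ψ (j+1) - 4 * ψ j) / 4 ^ (j+1) := by
  induction n with
  | zero => simp
  | succ n ih =>
    rw [Finset.sum_range_succ, ← ih, pow_succ]
    have h4 : (4 : ℝ) ^ n ≠ 0 := by positivity
    field_simp
    ring

lemma tendsto_aux {f g : ℕ → ℝ} {L C : ℝ}
    (hfg : ∀ n, |g n - f n| ≤ C)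
    (hf : Filter.Tendsto (fun n => f n / 4 ^ n) Filter.atTop (nhds L)) :
    Filter.Tendsto (fun n => g n / 4 ^ n) Filter.atTop (nhds L) := by
  have h0 : Filter.Tendsto (fun n : ℕ => (g n - f n) / 4 ^ n) Filter.atTop (nhds 0) := by
    have htend : Filter.Tendsto (fun n : ℕ => C * (1/4 : ℝ) ^ n) Filter.atTop (nhds 0) := by
      have := tendsto_pow_atTop_nhds_zero_of_lt_one (by norm_num : (0:ℝ) ≤ 1/4)
        (by norm_num : (1/4:ℝ) < 1)
      simpa using this.const_mul C
    refine squeeze_zero_norm (fun n => ?_) htend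
    have h4 : (0 : ℝ) < 4 ^ n := by positivity
    rw [Real.norm_eq_abs, abs_div, abs_of_pos h4, div_le_iff₀ h4]
    calc |g n - f n| ≤ C := hfg n
      _ = C * ((1/4 : ℝ)^n * 4^n) := by
          rw [div_pow, one_pow, div_mul_cancel₀ _ h4.ne', mul_one]
      _ = C * (1/4 : ℝ)^n * 4^n := by ring
  have h2 := hf.add h0
  simp only [add_zero] at h2
  have heq : (fun n : ℕ => g n / 4 ^ n) = fun n : ℕ => f n / 4 ^ n + (g n - f n) / 4 ^ n := by
    funext n
    have h4 : (4 : ℝ) ^ n ≠ 0 := by positivity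
    field_simp
    ring
  rw [heq]
  exact h2

end Aux

/-! ### The sequence of doubled points and its invariants -/

noncomputable def xseq {A : ℚ} (P : (Ecurve A).Point) (n : ℕ) : ℚ :=
  xCoord ((2 ^ n : ℤ) • P)

noncomputable def aseq {A : ℚ} (P : (Ecurve A).Point) (n : ℕ) : ℤ := (xseq P n).num

noncomputable def dseq {A : ℚ} (P : (Ecurve A).Point) (n : ℕ) : ℤ := ((xseq P n).den : ℤ)

noncomputable def sseq (Nz : ℤ) {A : ℚ} (P : (Ecurve A).Point) (n : ℕ) : ℤ :=
  (aseq P n) ^ 2 + Nz * (dseq P n) ^ 2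

noncomputable def Bseq (Nz : ℤ) {A : ℚ} (P : (Ecurve A).Point) (n : ℕ) : ℤ :=
  (aseq P n) ^ 3 - Nz * (aseq P n) * (dseq P n) ^ 2

set_option maxHeartbeats 1000000 in
/-- On `E : y² = x³ - 2rDx` with `2rD` square-free, for `P ∈ E(ℚ)` of infinite order with
`x(P) = a/d²` in lowest terms and Weil height `h(P) = log max{|a|, d²}`, the canonical
height (normalized so that `ĥ(P) = lim (1/2)·h(x([2ⁿ]P))/4ⁿ`) satisfies
`-(1/4)·log(4rD) ≤ ĥ(P) - (1/2)·h(P) ≤ (1/4)·log(2rD+1) + (1/12)·log 2`. -/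
theorem stmt_16 (r D : ℕ) (hr : 0 < r) (hD : 0 < D) (hsf : Squarefree (2 * r * D))
    (P : (Ecurve (-(2 * r * D : ℚ))).Point) (hP : ¬ IsOfFinAddOrder P)
    (a d : ℤ) (hd : 0 < d) (hcop : IsCoprime a d)
    (hx : xCoord P = (a : ℚ) / (d : ℚ) ^ 2)
    (hhat : ℝ)
    (hlim : Filter.Tendsto
      (fun n : ℕ => naiveHeight (xCoord ((2 ^ n : ℤ) • P)) / 2 / 4 ^ n)
      Filter.atTop (nhds hhat)) :
    -(1 / 4 : ℝ) * Real.log (4 * r * D) ≤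
        hhat - (1 / 2 : ℝ) * Real.log (max (|a| : ℝ) ((d : ℝ) ^ 2)) ∧
      hhat - (1 / 2 : ℝ) * Real.log (max (|a| : ℝ) ((d : ℝ) ^ 2)) ≤
        (1 / 4 : ℝ) * Real.log (2 * r * D + 1) + (1 / 12 : ℝ) * Real.log 2 := by
  classical
  -- ## Integer parameters
  have hrz : (0:ℤ) < (r:ℤ) := by exact_mod_cast hr
  have hDzpos : (0:ℤ) < (D:ℤ) := by exact_mod_cast hD
  set Nz : ℤ := 2 * (r:ℤ) * (D:ℤ) with hNzdef
  have hNpos : 0 < Nz := by positivity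
  have hN1 : (1:ℤ) ≤ Nz := hNpos
  have hNnat : ((2 * r * D : ℕ) : ℤ) = Nz := by rw [hNzdef]; push_cast; ring
  have hNsf : Squarefree Nz := by
    rw [← hNnat]
    exact Int.squarefree_natCast.mpr hsf
  have hN2 : (2:ℤ) ∣ Nz := ⟨(r:ℤ)*(D:ℤ), by rw [hNzdef]; ring⟩
  have hNzQ : ((Nz : ℤ) : ℚ) = 2 * (r:ℚ) * (D:ℚ) := by rw [hNzdef]; push_cast; ring
  -- ## The sequence of points is nonzero
  have hQ0 : ∀ n : ℕ, ((2 ^ n : ℤ) • P) ≠ 0 := by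
    intro n h
    exact hP (isOfFinAddOrder_iff_zsmul_eq_zero.mpr ⟨2 ^ n, by positivity, h⟩)
  have hQsucc : ∀ n : ℕ, ((2 ^ (n+1) : ℤ) • P) = ((2 ^ n : ℤ) • P) + ((2 ^ n : ℤ) • P) := by
    intro n
    rw [← add_zsmul]
    congr 1
    ring
  -- ## y-coordinates and the duplication formula
  have hy : ∀ n : ℕ, ∃ y : ℚ, y ≠ 0 ∧
      y ^ 2 = (xseq P n) ^ 3 + (-(2 * (r:ℚ) * (D:ℚ))) * (xseq P n) ∧
      xseq P (n+1) = ((xseq P n) ^ 2 - (-(2 * (r:ℚ) * (D:ℚ)))) ^ 2 /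
        (4 * ((xseq P n) ^ 3 + (-(2 * (r:ℚ) * (D:ℚ))) * (xseq P n))) := by
    intro n
    have h2 : ((2 ^ n : ℤ) • P) + ((2 ^ n : ℤ) • P) ≠ 0 := by
      rw [← hQsucc n]; exact hQ0 (n+1)
    obtain ⟨y, h1, hsq, h3⟩ := double_xCoord ((2 ^ n : ℤ) • P) (hQ0 n) h2
    refine ⟨y, h1, hsq, ?_⟩
    show xCoord ((2 ^ (n+1) : ℤ) • P) = _
    rw [hQsucc n]
    exact h3
  choose y hy0 hysq hyrec using hy
  -- ## Numerators and denominators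
  have hdpos : ∀ n, 0 < dseq P n := by
    intro n
    show (0:ℤ) < ((xseq P n).den : ℤ)
    exact_mod_cast (xseq P n).pos
  have hcopn : ∀ n, IsCoprime (aseq P n) (dseq P n) := fun n => rat_isCoprime (xseq P n)
  have hxnd : ∀ n, xseq P n = (aseq P n : ℚ) / (dseq P n : ℚ) := by
    intro n
    show xseq P n = ((xseq P n).num : ℚ) / ((((xseq P n).den : ℤ)) : ℚ)
    push_cast
    exact (Rat.num_div_den _).symm
  have hypos : ∀ n, 0 < (xseq P n) ^ 3 + (-(2 * (r:ℚ) * (D:ℚ))) * (xseq P n) := by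
    intro n
    rw [← hysq n]
    have := hy0 n
    positivity
  have hBcast : ∀ n, (Bseq Nz P n : ℚ) =
      ((xseq P n) ^ 3 + (-(2 * (r:ℚ) * (D:ℚ))) * (xseq P n)) * (dseq P n : ℚ) ^ 3 := by
    intro n
    have hd0 : (dseq P n : ℚ) ≠ 0 := by
      have := hdpos n
      exact_mod_cast this.ne'
    show (((aseq P n) ^ 3 - Nz * (aseq P n) * (dseq P n) ^ 2 : ℤ) : ℚ) = _
    rw [hxnd n]
    push_cast [hNzQ]
    field_simp
    ring
  have hBpos : ∀ n, 0 < Bseq Nz P n := by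
    intro n
    have h1 : (0:ℚ) < (Bseq Nz P n : ℚ) := by
      rw [hBcast n]
      have h2 := hypos n
      have h3 : (0:ℚ) < (dseq P n : ℚ) := by exact_mod_cast hdpos n
      positivity
    exact_mod_cast h1
  -- ## The duplication recursion on numerators/denominators
  have hxsucc : ∀ n, xseq P (n+1) =
      (((sseq Nz P n) ^ 2 : ℤ) : ℚ) / ((4 * dseq P n * Bseq Nz P n : ℤ) : ℚ) := by
    intro n
    have hd0 : (dseq P n : ℚ) ≠ 0 := by
      have := hdpos n
      exact_mod_cast this.ne'
    have hden : ((xseq P n) ^ 3 + (-(2 * (r:ℚ) * (D:ℚ))) * (xseq P n)) ≠ 0 := (hypos n).ne'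
    have hB0 : ((4 * dseq P n * Bseq Nz P n : ℤ) : ℚ) ≠ 0 := by
      have h1 := hdpos n
      have h2 := hBpos n
      have h3 : (0:ℤ) < 4 * dseq P n * Bseq Nz P n := by positivity
      exact_mod_cast h3.ne'
    rw [hyrec n, div_eq_div_iff (mul_ne_zero (by norm_num) hden) hB0, hxnd n]
    push_cast [sseq, Bseq, hNzQ]
    field_simp
    ring
  have hvpos : ∀ n, (0:ℤ) < 4 * dseq P n * Bseq Nz P n := by
    intro n
    have h1 := hdpos n
    have h2 := hBpos n
    positivity
  have hkex : ∀ n, ∃ k : ℤ, 0 < k ∧ (sseq Nz P n) ^ 2 = aseq P (n+1) * k ∧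
      4 * dseq P n * Bseq Nz P n = dseq P (n+1) * k := by
    intro n
    obtain ⟨k, hk0, hk1, hk2⟩ :=
      rat_div_exists ((sseq Nz P n) ^ 2) (4 * dseq P n * Bseq Nz P n) (hvpos n)
    have hxq : (((sseq Nz P n) ^ 2 : ℤ) : ℚ) / ((4 * dseq P n * Bseq Nz P n : ℤ) : ℚ) =
        xseq P (n+1) := (hxsucc n).symm
    rw [hxq] at hk1 hk2
    exact ⟨k, hk0, hk1, hk2⟩
  choose k hkpos hk1 hk2 using hkex
  -- ## gcd characterisation of k
  have hgcdk : ∀ n, ∀ c : ℤ, c ∣ (sseq Nz P n) ^ 2 → c ∣ 4 * dseq P n * Bseq Nz P n →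
      c ∣ k n := by
    intro n c h1 h2
    have hg : Int.gcd ((sseq Nz P n) ^ 2) (4 * dseq P n * Bseq Nz P n) = (k n).natAbs := by
      rw [hk1 n, hk2 n, Int.gcd_mul_right,
        Int.isCoprime_iff_gcd_eq_one.mp (hcopn (n+1)), one_mul]
    have h3 : c ∣ ((k n).natAbs : ℤ) := by
      rw [← hg]
      exact Int.dvd_coe_gcd h1 h2
    exact Int.dvd_natAbs.mp h3
  -- ## Number-theoretic consequences
  have hNT : ∀ n, ∀ p : ℤ, Prime p → p ∣ k n →
      p ∣ aseq P n ∧ p ∣ Nz ∧ ¬ p ^ 3 ∣ k n := by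
    intro n p hp hpk
    exact NT_main (hcopn n) rfl rfl (hk1 n) (hk2 n) hNsf hN2 hp hpk
  have hNTnext : ∀ n, ∀ p : ℤ, Prime p → p ∣ Nz → ¬ p ∣ aseq P (n+1) := by
    intro n p hp hpN
    exact NT_next (hcopn n) rfl rfl (hk1 n) (hgcdk n) hNsf hp hpN
  have hkone : ∀ n, k (n+1) = 1 := by
    intro n
    by_contra hne
    have hnat : (k (n+1)).natAbs ≠ 1 := by
      intro h
      apply hne
      have h' := Int.natAbs_eq (k (n+1))
      have hkp := hkpos (n+1)
      omega
    obtain ⟨p, hp, hpd⟩ := Nat.exists_prime_and_dvd hnat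
    have hpz : Prime (p : ℤ) := by
      rw [Int.prime_iff_natAbs_prime]
      simpa using hp
    have hpk : (p:ℤ) ∣ k (n+1) := Int.dvd_natAbs.mp (Int.natCast_dvd_natCast.mpr hpd)
    obtain ⟨hpa, hpN, -⟩ := hNT (n+1) (p:ℤ) hpz hpk
    exact hNTnext n (p:ℤ) hpz hpN hpa
  have hk0dvd : k 0 ∣ Nz ^ 2 := by
    have hKne : (k 0).natAbs ≠ 0 := by
      have := hkpos 0
      omega
    have hMne : (2 * r * D : ℕ) ≠ 0 := by positivity
    have hdvd : (k 0).natAbs ∣ (2 * r * D : ℕ) ^ 2 := by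
      apply dvd_sq_of_forall_prime hKne hMne
      intro p hp hpd
      have hpz : Prime (p : ℤ) := by
        rw [Int.prime_iff_natAbs_prime]
        simpa using hp
      have hpk : (p:ℤ) ∣ k 0 := Int.dvd_natAbs.mp (Int.natCast_dvd_natCast.mpr hpd)
      obtain ⟨-, hpN, hp3⟩ := hNT 0 (p:ℤ) hpz hpk
      constructor
      · have h1 : (p:ℤ) ∣ ((2*r*D : ℕ) : ℤ) := by rw [hNnat]; exact hpN
        exact_mod_cast h1
      · intro h3
        apply hp3
        have h4 : ((p:ℤ))^3 ∣ ((k 0).natAbs : ℤ) := by exact_mod_cast h3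
        exact Int.dvd_natAbs.mp h4
    have hkeq : ((k 0).natAbs : ℤ) = k 0 := Int.natAbs_of_nonneg (hkpos 0).le
    calc k 0 = ((k 0).natAbs : ℤ) := hkeq.symm
      _ ∣ (((2*r*D : ℕ)^2 : ℕ) : ℤ) := Int.natCast_dvd_natCast.mpr hdvd
      _ = Nz ^ 2 := by rw [Nat.cast_pow, hNnat]
  -- ## The real-valued potential
  set ψ : ℕ → ℝ := fun n => (1/4) * Real.log ((sseq Nz P n : ℤ) : ℝ) with hψdef
  have hs1 : ∀ n, (1:ℤ) ≤ sseq Nz P n := by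
    intro n
    have h1 := hdpos n
    have h2 : (1:ℤ) ≤ Nz * (dseq P n)^2 := by nlinarith
    have h3 : (0:ℤ) ≤ (aseq P n)^2 := sq_nonneg _
    show (1:ℤ) ≤ (aseq P n) ^ 2 + Nz * (dseq P n) ^ 2
    linarith
  have hsRpos : ∀ n, (0:ℝ) < ((sseq Nz P n : ℤ) : ℝ) := by
    intro n
    have h := hs1 n
    have h' : (0:ℤ) < sseq Nz P n := by linarith
    exact_mod_cast h'
  have hstep : ∀ n, sseq Nz P (n+1) * (k n)^2 =
      (sseq Nz P n)^4 + 16 * Nz * (dseq P n)^2 * (Bseq Nz P n)^2 := by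
    intro n
    have e1 := hk1 n
    have e2 := hk2 n
    simp only [sseq] at e1 ⊢
    linear_combination
      (-((aseq P n ^ 2 + Nz * dseq P n ^ 2) ^ 2 + aseq P (n+1) * k n)) * e1 +
      (-(Nz * (dseq P (n+1) * k n + 4 * dseq P n * Bseq Nz P n))) * e2
  have hklogpos : ∀ n, (0:ℝ) ≤ Real.log ((k n : ℤ) : ℝ) := by
    intro n
    apply Real.log_nonneg
    have h : (1:ℤ) ≤ k n := hkpos n
    exact_mod_cast h
  have hψstep : ∀ n,
      4 * ψ n - (1/2) * Real.log ((k n : ℤ) : ℝ) ≤ ψ (n+1) ∧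
      ψ (n+1) ≤ 4 * ψ n + (1/4) * Real.log 2 - (1/2) * Real.log ((k n : ℤ) : ℝ) := by
    intro n
    have hS := hsRpos n
    have hS' := hsRpos (n+1)
    have hkR : (0:ℝ) < ((k n : ℤ) : ℝ) := by exact_mod_cast hkpos n
    have hTnonneg : (0:ℤ) ≤ 16 * Nz * (dseq P n)^2 * (Bseq Nz P n)^2 := by positivity
    have hTle : 16 * Nz * (dseq P n)^2 * (Bseq Nz P n)^2 ≤ (sseq Nz P n)^4 := by
      simp only [sseq, Bseq]
      nlinarith [sq_nonneg ((aseq P n ^ 2 - Nz * dseq P n ^ 2) ^ 2 -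
        4 * aseq P n ^ 2 * (Nz * dseq P n ^ 2))]
    have hlo : (sseq Nz P n)^4 ≤ sseq Nz P (n+1) * (k n)^2 := by
      rw [hstep n]; linarith
    have hhi : sseq Nz P (n+1) * (k n)^2 ≤ 2 * (sseq Nz P n)^4 := by
      rw [hstep n]; linarith
    have hloR : (((sseq Nz P n : ℤ):ℝ))^4 ≤
        ((sseq Nz P (n+1) : ℤ):ℝ) * (((k n : ℤ):ℝ))^2 := by exact_mod_cast hlo
    have hhiR : ((sseq Nz P (n+1) : ℤ):ℝ) * (((k n : ℤ):ℝ))^2 ≤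
        2 * (((sseq Nz P n : ℤ):ℝ))^4 := by exact_mod_cast hhi
    have hprod : (0:ℝ) < ((sseq Nz P (n+1) : ℤ):ℝ) * (((k n : ℤ):ℝ))^2 := by positivity
    have hl1 : Real.log ((((sseq Nz P n : ℤ):ℝ))^4) ≤
        Real.log (((sseq Nz P (n+1) : ℤ):ℝ) * (((k n : ℤ):ℝ))^2) :=
      Real.log_le_log (by positivity) hloR
    have hl2 : Real.log (((sseq Nz P (n+1) : ℤ):ℝ) * (((k n : ℤ):ℝ))^2) ≤
        Real.log (2 * (((sseq Nz P n : ℤ):ℝ))^4) :=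
      Real.log_le_log hprod hhiR
    have he1 : Real.log (((sseq Nz P (n+1) : ℤ):ℝ) * (((k n : ℤ):ℝ))^2) =
        Real.log ((sseq Nz P (n+1) : ℤ):ℝ) + 2 * Real.log ((k n : ℤ):ℝ) := by
      rw [Real.log_mul hS'.ne' (by positivity), Real.log_pow]
      norm_num
    have he2 : Real.log ((((sseq Nz P n : ℤ):ℝ))^4) =
        4 * Real.log ((sseq Nz P n : ℤ):ℝ) := by
      rw [Real.log_pow]; norm_num
    have he3 : Real.log (2 * (((sseq Nz P n : ℤ):ℝ))^4) =
        Real.log 2 + 4 * Real.log ((sseq Nz P n : ℤ):ℝ) := by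
      rw [Real.log_mul (by norm_num) (by positivity), Real.log_pow]
      norm_num
    rw [he1] at hl1 hl2
    rw [he2] at hl1
    rw [he3] at hl2
    constructor
    · simp only [hψdef]; linarith
    · simp only [hψdef]; linarith
  -- ## Comparison of the potential with the naive height
  have hmax1 : ∀ n, (1:ℤ) ≤ max |aseq P n| (dseq P n) :=
    fun n => le_max_of_le_right (hdpos n)
  have hmaxsq : ∀ n, (max |aseq P n| (dseq P n))^2 ≤ sseq Nz P n ∧
      sseq Nz P n ≤ (Nz + 1) * (max |aseq P n| (dseq P n))^2 := by
    intro n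
    have h1 := hdpos n
    have habs := sq_abs (aseq P n)
    have hd0 : (0:ℤ) ≤ dseq P n := h1.le
    have ha0 : (0:ℤ) ≤ |aseq P n| := abs_nonneg _
    have hNd : (0:ℤ) ≤ Nz * (dseq P n)^2 := by positivity
    simp only [sseq]
    rcases max_cases |aseq P n| (dseq P n) with ⟨hm, hge⟩ | ⟨hm, hlt⟩ <;>
      rw [hm] <;> constructor
    · nlinarith
    · have hd2 : (dseq P n)^2 ≤ |aseq P n|^2 := by nlinarith
      nlinarith [mul_le_mul_of_nonneg_left hd2 hNpos.le]
    · nlinarith [mul_nonneg (by linarith : (0:ℤ) ≤ Nz - 1) (sq_nonneg (dseq P n))]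
    · have ha2 : (aseq P n)^2 ≤ (dseq P n)^2 := by nlinarith
      nlinarith
  have hnaive : ∀ n, naiveHeight (xseq P n) =
      Real.log (((max |aseq P n| (dseq P n) : ℤ) : ℝ)) := by
    intro n
    have h : (((max |aseq P n| (dseq P n) : ℤ)) : ℝ) =
        max (|(xseq P n).num| : ℝ) ((xseq P n).den : ℝ) := by
      rw [Int.cast_max]
      norm_cast
    rw [naiveHeight, h]
  have hψcmp : ∀ n, 0 ≤ ψ n - naiveHeight (xseq P n) / 2 ∧
      ψ n - naiveHeight (xseq P n) / 2 ≤ (1/4) * Real.log ((Nz:ℝ) + 1) := by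
    intro n
    obtain ⟨hm1, hm2⟩ := hmaxsq n
    have hm0 : (1:ℤ) ≤ max |aseq P n| (dseq P n) := hmax1 n
    have hmR : (1:ℝ) ≤ ((max |aseq P n| (dseq P n) : ℤ) : ℝ) := by exact_mod_cast hm0
    have hmRpos : (0:ℝ) < ((max |aseq P n| (dseq P n) : ℤ) : ℝ) := by linarith
    have hm1R : ((max |aseq P n| (dseq P n) : ℤ) : ℝ)^2 ≤ ((sseq Nz P n : ℤ) : ℝ) := by
      exact_mod_cast hm1
    have hm2R : ((sseq Nz P n : ℤ) : ℝ) ≤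
        ((Nz:ℝ) + 1) * ((max |aseq P n| (dseq P n) : ℤ) : ℝ)^2 := by
      have : ((Nz:ℝ) + 1) = (((Nz + 1 : ℤ)) : ℝ) := by push_cast; ring
      rw [this]
      exact_mod_cast hm2
    have hN1R : (1:ℝ) ≤ ((Nz:ℤ):ℝ) := by exact_mod_cast hN1
    have hl1 : Real.log (((max |aseq P n| (dseq P n) : ℤ) : ℝ)^2) ≤
        Real.log ((sseq Nz P n : ℤ) : ℝ) := Real.log_le_log (by positivity) hm1R
    have hl2 : Real.log ((sseq Nz P n : ℤ) : ℝ) ≤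
        Real.log (((Nz:ℝ)+1) * ((max |aseq P n| (dseq P n) : ℤ) : ℝ)^2) :=
      Real.log_le_log (hsRpos n) hm2R
    have he1 : Real.log (((max |aseq P n| (dseq P n) : ℤ) : ℝ)^2) =
        2 * Real.log ((max |aseq P n| (dseq P n) : ℤ) : ℝ) := by
      rw [Real.log_pow]; norm_num
    have he2 : Real.log (((Nz:ℝ)+1) * ((max |aseq P n| (dseq P n) : ℤ) : ℝ)^2) =
        Real.log ((Nz:ℝ)+1) + 2 * Real.log ((max |aseq P n| (dseq P n) : ℤ) : ℝ) := by
      rw [Real.log_mul (by linarith) (by positivity), Real.log_pow]; norm_num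
    rw [he1] at hl1
    rw [he2] at hl2
    rw [hnaive n]
    constructor
    · simp only [hψdef]; linarith
    · simp only [hψdef]; linarith
  have hlogN1 : (0:ℝ) ≤ Real.log ((Nz:ℝ) + 1) := by
    apply Real.log_nonneg
    have : (1:ℝ) ≤ ((Nz:ℤ):ℝ) := by exact_mod_cast hN1
    linarith
  have hψabs : ∀ n, |ψ n - naiveHeight (xseq P n) / 2| ≤ (1/4) * Real.log ((Nz:ℝ) + 1) := by
    intro n
    obtain ⟨h1, h2⟩ := hψcmp n
    rw [abs_le]
    exact ⟨by linarith, h2⟩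
  have hT : Filter.Tendsto (fun n => ψ n / 4 ^ n) Filter.atTop (nhds hhat) :=
    tendsto_aux hψabs hlim
  -- ## Summation bounds
  have hL2 : (0:ℝ) ≤ Real.log 2 := Real.log_nonneg (by norm_num)
  have hup : ∀ n, ψ n / 4^n - ψ 0 ≤ (1/12) * Real.log 2 := by
    intro n
    rw [telescope_sum ψ n]
    have hsum : ∑ j ∈ Finset.range n, (ψ (j+1) - 4*ψ j)/4^(j+1) ≤
        ∑ j ∈ Finset.range n, ((1/4)*Real.log 2) * ((1:ℝ)/4)^(j+1) := by
      apply Finset.sum_le_sum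
      intro j _
      have h1 := (hψstep j).2
      have h2 := hklogpos j
      have he : ((1/4)*Real.log 2) * ((1:ℝ)/4)^(j+1) = ((1/4)*Real.log 2)/4^(j+1) := by
        rw [div_pow, one_pow]
        ring
      rw [he]
      gcongr
      linarith
    have hgeom := geom_closed n
    have hpow : (0:ℝ) ≤ ((1:ℝ)/4)^n := by positivity
    calc ∑ j ∈ Finset.range n, (ψ (j+1) - 4*ψ j)/4^(j+1)
        ≤ ∑ j ∈ Finset.range n, ((1/4)*Real.log 2) * ((1:ℝ)/4)^(j+1) := hsum
      _ = ((1/4)*Real.log 2) * ∑ j ∈ Finset.range n, ((1:ℝ)/4)^(j+1) :=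
          (Finset.mul_sum _ _ _).symm
      _ = ((1/4)*Real.log 2) * ((1 - (1/4)^n)/3) := by rw [hgeom]
      _ ≤ (1/12)*Real.log 2 := by nlinarith
  have hlow : ∀ n, -((1/8) * Real.log ((k 0 : ℤ) : ℝ)) ≤ ψ n / 4^n - ψ 0 := by
    intro n
    rw [telescope_sum ψ n]
    have hk0log := hklogpos 0
    cases n with
    | zero =>
      simp only [Finset.range_zero, Finset.sum_empty]
      linarith
    | succ n =>
      rw [Finset.sum_range_succ']
      have h0 : -((1/8) * Real.log ((k 0 : ℤ) : ℝ)) ≤ (ψ (0+1) - 4*ψ 0)/4^(0+1) := by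
        have h1 := (hψstep 0).1
        have h4 : (0:ℝ) < (4:ℝ)^(0+1) := by positivity
        rw [le_div_iff₀ h4]
        norm_num
        linarith
      have hrest : (0:ℝ) ≤ ∑ i ∈ Finset.range n, (ψ (i+1+1) - 4*ψ (i+1))/4^(i+1+1) := by
        apply Finset.sum_nonneg
        intro i _
        have h1 := (hψstep (i+1)).1
        have h2 : Real.log ((k (i+1) : ℤ) : ℝ) = 0 := by
          rw [hkone i]
          norm_num
        rw [h2] at h1
        have h4 : (0:ℝ) < (4:ℝ)^(i+1+1) := by positivity
        apply div_nonneg _ h4.le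
        linarith
      linarith
  -- ## Passing to the limit
  have hTsub : Filter.Tendsto (fun n => ψ n / 4^n - ψ 0) Filter.atTop (nhds (hhat - ψ 0)) :=
    hT.sub_const (ψ 0)
  have hub' : hhat - ψ 0 ≤ (1/12) * Real.log 2 := le_of_tendsto' hTsub hup
  have hlb' : -((1/8) * Real.log ((k 0 : ℤ) : ℝ)) ≤ hhat - ψ 0 := ge_of_tendsto' hTsub hlow
  -- ## Identification of a, d with the level-0 data
  have hx0 : xseq P 0 = (a : ℚ) / (d : ℚ)^2 := by
    show xCoord ((2^0 : ℤ) • P) = _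
    rw [pow_zero, one_zsmul]
    exact hx
  have ha0d0 : aseq P 0 = a ∧ dseq P 0 = d^2 := by
    have hdd : (0:ℤ) < d^2 := by positivity
    obtain ⟨k0', hk0'pos, hk0'1, hk0'2⟩ := rat_div_exists a (d^2) hdd
    have hqeq : ((a : ℚ))/(((d^2 : ℤ)) : ℚ) = xseq P 0 := by
      rw [hx0]
      push_cast
      ring
    rw [hqeq] at hk0'1 hk0'2
    have hk0'a : k0' ∣ a := ⟨(xseq P 0).num, by rw [hk0'1]; ring⟩
    have hk0'd : k0' ∣ d^2 := ⟨((xseq P 0).den : ℤ), by rw [hk0'2]; ring⟩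
    have hunit : IsUnit k0' := (hcop.pow_right).isUnit_of_dvd' hk0'a hk0'd
    have hk0'eq : k0' = 1 := by
      rcases Int.isUnit_iff.mp hunit with h | h
      · exact h
      · omega
    rw [hk0'eq, mul_one] at hk0'1 hk0'2
    exact ⟨hk0'1.symm, hk0'2.symm⟩
  have hf0 : naiveHeight (xseq P 0) = Real.log (max (|a| : ℝ) ((d:ℝ)^2)) := by
    rw [hnaive 0]
    congr 1
    rw [ha0d0.1, ha0d0.2, Int.cast_max]
    push_cast
    rfl
  have hf0' : naiveHeight (xseq P 0) / 2 = (1/2) * Real.log (max (|a| : ℝ) ((d:ℝ)^2)) := by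
    rw [hf0]; ring
  -- ## Final assembly
  obtain ⟨hcmp0l, hcmp0u⟩ := hψcmp 0
  have hklog2 : Real.log ((k 0 : ℤ) : ℝ) ≤ 2 * Real.log ((Nz:ℤ):ℝ) := by
    have hkle : (k 0 : ℤ) ≤ Nz^2 := Int.le_of_dvd (by positivity) hk0dvd
    have hkleR : ((k 0 : ℤ) : ℝ) ≤ (((Nz:ℤ)):ℝ)^2 := by exact_mod_cast hkle
    have h := Real.log_le_log (by exact_mod_cast hkpos 0) hkleR
    rw [Real.log_pow] at h
    norm_num at h
    linarith
  have hNzR : ((Nz:ℤ):ℝ) = 2*(r:ℝ)*(D:ℝ) := by rw [hNzdef]; push_cast; ring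
  have h1R : (1:ℝ) ≤ (r:ℝ) := by exact_mod_cast hr
  have h2R : (1:ℝ) ≤ (D:ℝ) := by exact_mod_cast hD
  constructor
  · -- lower bound
    have hlog24 : Real.log ((Nz:ℤ):ℝ) ≤ Real.log (4*(r:ℝ)*(D:ℝ)) := by
      apply Real.log_le_log
      · rw [hNzR]; positivity
      · rw [hNzR]; nlinarith
    calc -(1/4 : ℝ) * Real.log (4*(r:ℝ)*(D:ℝ))
        ≤ -(1/4 : ℝ) * Real.log ((Nz:ℤ):ℝ) := by linarith
      _ ≤ (hhat - ψ 0) + (ψ 0 - naiveHeight (xseq P 0)/2) := by linarith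
      _ = hhat - (1/2 : ℝ)*Real.log (max (|a|:ℝ) ((d:ℝ)^2)) := by rw [hf0']; ring
  · -- upper bound
    have h2 : Real.log (((Nz:ℤ):ℝ) + 1) = Real.log (2*(r:ℝ)*(D:ℝ) + 1) := by rw [hNzR]
    calc hhat - (1/2 : ℝ)*Real.log (max (|a|:ℝ) ((d:ℝ)^2))
        = (hhat - ψ 0) + (ψ 0 - naiveHeight (xseq P 0)/2) := by rw [hf0']; ring
      _ ≤ (1/12)*Real.log 2 + (1/4)*Real.log (((Nz:ℤ):ℝ)+1) := by linarith
      _ = (1/4 : ℝ)*Real.log (2*(r:ℝ)*(D:ℝ)+1) + (1/12 : ℝ)*Real.log 2 := by rw [h2]; ring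
end
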